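/- arXiv:2304.06629 — 3 statements merged into one kernel-verified Lean document; each statement's English description precedes it below -/
import Mathlib

section
/- For every real α ≥ 1 and every integer n ≥ 4, the Jack derangement number of the one-row shape (n) satisfies 3 · D^{(n)}_α > Π_{i=1}^{n} (α(n − i) + 1), where D^{(n)}_α = Σ_{k=1}^{n} d_k α^{n−k} and d_k is the number of fixed-point-free permutations of an n-element set having exactly k cycles. -/
open Finset

/-- The conjugate partition: `conjP L j = λ′_j = #{i : λ_i ≥ j}`. -/
def conjP (L : List ℕ) (j : ℕ) : ℕ := (L.filter (fun p => decide (j ≤ p))).length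

/-- `L` is the list of parts of an integer partition (weakly decreasing, positive parts). -/
def IsPartition (L : List ℕ) : Prop := L.Pairwise (· ≥ ·) ∧ ∀ p ∈ L, 0 < p

/-- Colored permutations of shape `L`: a coloring `c` of the symbols `1,…,λ₁` (represented by
`Fin λ₁`, symbol `i` being `i.1 + 1`) with `1 ≤ c i ≤ λ′_i`, together with a permutation whose
cycles are monochromatic. -/
def ColoredPerms (L : List ℕ) :
    Set ((Fin L.headI → ℕ) × Equiv.Perm (Fin L.headI)) :=
  {x | (∀ i, 1 ≤ x.1 i ∧ x.1 i ≤ conjP L (i.1 + 1)) ∧ ∀ i, x.1 (x.2 i) = x.1 i}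

/-- Colored derangements of shape `L`: colored permutations such that `σ i = i → c i ≠ 1`. -/
def ColoredDerangements (L : List ℕ) :
    Set ((Fin L.headI → ℕ) × Equiv.Perm (Fin L.headI)) :=
  {x | x ∈ ColoredPerms L ∧ ∀ i, x.2 i = i → x.1 i ≠ 1}

/-- Number of cycles of a permutation in its disjoint cycle decomposition,
fixed points counting as cycles. -/
noncomputable def cycleCount {m : ℕ} (σ : Equiv.Perm (Fin m)) : ℕ :=
  σ.cycleType.card + (Finset.univ.filter fun i => σ i = i).card

/-- `dCount L k` : the number `d^λ_k` of colored derangements of shape `L`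
whose permutation has exactly `k` cycles. -/
noncomputable def dCount (L : List ℕ) (k : ℕ) : ℕ :=
  Set.ncard {x | x ∈ ColoredDerangements L ∧ cycleCount x.2 = k}

/-- The λ-Jack derangement number `D^λ_α = Σ_{k=1}^{λ₁} d^λ_k α^{λ₁−k}`. -/
noncomputable def JackD (L : List ℕ) (α : ℝ) : ℝ :=
  ∑ k ∈ Finset.Icc 1 L.headI, (dCount L k : ℝ) * α ^ (L.headI - k)

/-- Block (0-based) of a point of `{1,…,2m}` (points represented by `Fin (2m)`,
point `p` being `p.1 + 1`; the block of `p` is `k` iff `p ∈ {2k−1, 2k}` 1-based). -/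
def blk {m : ℕ} (p : Fin (2 * m)) : Fin m := ⟨p.1 / 2, by have := p.2; omega⟩

/-- Colored perfect matchings of shape `L`: a perfect matching of `{1,…,2λ₁}` (a
fixed-point-free involution) together with a coloring `c` of the blocks `{2k−1,2k}` with
`1 ≤ c_k ≤ λ′_k`, such that matched points lie in blocks of the same color. -/
def ColoredMatchings (L : List ℕ) :
    Set ((Fin L.headI → ℕ) × Equiv.Perm (Fin (2 * L.headI))) :=
  {x | Function.Involutive x.2 ∧ (∀ p, x.2 p ≠ p) ∧
        (∀ k, 1 ≤ x.1 k ∧ x.1 k ≤ conjP L (k.1 + 1)) ∧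
        (∀ p, x.1 (blk (x.2 p)) = x.1 (blk p))}

/-- Colored perfect matching derangements of shape `L`: colored perfect matchings such that
whenever a block `{2k−1,2k}` is itself a pair of the matching, its color is not `1`. -/
def ColoredMatchDerangements (L : List ℕ) :
    Set ((Fin L.headI → ℕ) × Equiv.Perm (Fin (2 * L.headI))) :=
  {x | x ∈ ColoredMatchings L ∧ ∀ p, blk (x.2 p) = blk p → x.1 (blk p) ≠ 1}

/-- The principal lower hook length `h_j = α(λ₁ − j) + λ′_j` of the cell `(1,j)`. -/
noncomputable def hlow (L : List ℕ) (α : ℝ) (j : ℕ) : ℝ :=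
  α * ((L.headI : ℝ) - (j : ℝ)) + (conjP L j : ℝ)

/-- `fixPtCount m k` : the number `d_{m,k}` of permutations of `{1,…,m}` with exactly
`k` fixed points. -/
noncomputable def fixPtCount (m k : ℕ) : ℕ :=
  Set.ncard {σ : Equiv.Perm (Fin m) | (Finset.univ.filter fun i => σ i = i).card = k}

/-- `Ematch m` : the number of perfect matchings of `{1,…,2m}` containing none of the base
pairs `{2t−1, 2t}`. -/
noncomputable def Ematch (m : ℕ) : ℕ :=
  Set.ncard {σ : Equiv.Perm (Fin (2 * m)) |
    Function.Involutive σ ∧ (∀ p, σ p ≠ p) ∧ ∀ p, (σ p).1 / 2 ≠ p.1 / 2}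

open Equiv Equiv.Perm

variable {β : Type*} [Fintype β] [DecidableEq β]

def eln (σ : Equiv.Perm β) : ℕ := (σ.cycleType.map (· - 1)).sum

lemma eln_one : eln (1 : Perm β) = 0 := by simp [eln]

lemma eln_disjoint {σ τ : Perm β} (h : Perm.Disjoint σ τ) :
    eln (σ * τ) = eln σ + eln τ := by
  simp [eln, h.cycleType_mul]

lemma eln_isCycle {σ : Perm β} (h : IsCycle σ) : eln σ = σ.support.card - 1 := by
  simp [eln, h.cycleType]

lemma eln_splice {σ : Perm β} {x : β} (hx : σ x ≠ x) :
    eln σ = eln (swap x (σ x) * σ) + 1 := by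
  classical
  set c := σ.cycleOf x with hc
  have hcmem : c ∈ σ.cycleFactorsFinset :=
    cycleOf_mem_cycleFactorsFinset_iff.mpr (mem_support.mpr hx)
  have hccycle : IsCycle c := isCycle_cycleOf σ hx
  have hdisj : Perm.Disjoint (σ * c⁻¹) c := disjoint_mul_inv_of_mem_cycleFactorsFinset hcmem
  have hcx : c x = σ x := cycleOf_apply_self σ x
  have hcxx : c x ≠ x := by rw [hcx]; exact hx
  have hσ : σ = (σ * c⁻¹) * c := by simp
  have key : swap x (σ x) * σ = (swap x (c x) * c) * (σ * c⁻¹) := by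
    rw [← hcx]
    calc swap x (c x) * σ = swap x (c x) * ((σ * c⁻¹) * c) := by rw [← hσ]
    _ = swap x (c x) * (c * (σ * c⁻¹)) := by rw [hdisj.commute.eq]
    _ = (swap x (c x) * c) * (σ * c⁻¹) := by rw [mul_assoc]
  have hesplit : eln σ = eln (σ * c⁻¹) + (c.support.card - 1) := by
    conv_lhs => rw [hσ]
    rw [eln_disjoint hdisj, eln_isCycle hccycle]
  by_cases h2 : c (c x) = x
  · have hceq : c = swap x (c x) := hccycle.eq_swap_of_apply_apply_eq_self hcxx h2
    have h1 : swap x (σ x) * σ = σ * c⁻¹ := by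
      rw [key, ← hceq]
      have : c * c = 1 := by rw [hceq]; exact swap_mul_self _ _
      rw [← mul_assoc, this, one_mul]
    have hcard : c.support.card = 2 := by
      rw [hceq, card_support_swap hcxx.symm]
    rw [h1, hesplit, hcard]
  · have hc' : IsCycle (swap x (c x) * c) := hccycle.swap_mul hcxx h2
    have hsupp : (swap x (c x) * c).support = c.support \ {x} := support_swap_mul_eq c x h2
    have hxc : x ∈ c.support := mem_support.mpr hcxx
    have hdisj' : Perm.Disjoint (swap x (c x) * c) (σ * c⁻¹) := by
      rw [disjoint_iff_disjoint_support, hsupp]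
      exact Finset.disjoint_of_subset_left (Finset.sdiff_subset)
        (disjoint_iff_disjoint_support.mp hdisj.symm)
    have hcard2 : 2 ≤ c.support.card := hccycle.two_le_card_support
    have hcard' : (swap x (c x) * c).support.card = c.support.card - 1 := by
      rw [hsupp, Finset.card_sdiff_of_subset (by simpa using hxc)]
      simp
    rw [key, eln_disjoint hdisj', eln_isCycle hc', hcard', hesplit]
    omega
open Equiv Equiv.Perm

variable {β : Type*} [Fintype β] [DecidableEq β] {γ : Type*} [Fintype γ] [DecidableEq γ]

lemma optionCongr_eq_extendDomain (τ : Perm β) :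
    optionCongr τ = τ.extendDomain (Equiv.optionIsSomeEquiv β).symm := by
  ext x
  cases x with
  | none =>
      rw [Perm.extendDomain_apply_not_subtype]
      · simp
      · simp [Equiv.optionIsSomeEquiv]
  | some a =>
      rw [Perm.extendDomain_apply_subtype (p := fun x : Option β => x.isSome ) _ _ (by simp)]
      simp [Equiv.optionIsSomeEquiv]

lemma cycleType_optionCongr (τ : Perm β) :
    Equiv.Perm.cycleType (optionCongr τ) = τ.cycleType := by
  rw [optionCongr_eq_extendDomain, cycleType_extendDomain]

lemma permCongr_eq_extendDomain (e : β ≃ γ) (τ : Perm β) :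
    e.permCongr τ = τ.extendDomain (e.trans (Equiv.subtypeUnivEquiv (fun _ => trivial)).symm) := by
  ext x
  rw [Perm.extendDomain_apply_subtype (p := fun _ : γ => True) _ _ trivial]
  simp [Equiv.subtypeUnivEquiv]

lemma cycleType_permCongr (e : β ≃ γ) (τ : Perm β) :
    (e.permCongr τ).cycleType = τ.cycleType := by
  rw [permCongr_eq_extendDomain, cycleType_extendDomain]

variable (α : ℝ)

noncomputable def derSum (β : Type*) [Fintype β] [DecidableEq β] : ℝ :=
  ∑ σ ∈ univ.filter (fun σ : Perm β => ∀ i, σ i ≠ i), α ^ eln σ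

noncomputable def dS : ℕ → ℝ := fun m => derSum α (Fin m)

lemma derSum_congr (e : β ≃ γ) : derSum α β = derSum α γ := by
  unfold derSum
  refine Finset.sum_bij' (fun σ _ => e.permCongr σ) (fun τ _ => e.symm.permCongr τ)
    ?_ ?_ ?_ ?_ ?_
  · intro σ hσ
    simp only [mem_filter, mem_univ, true_and] at hσ ⊢
    intro i h
    have : σ (e.symm i) = e.symm i := by
      have := congrArg e.symm h
      simpa using this
    exact hσ _ this
  · intro τ hτ
    simp only [mem_filter, mem_univ, true_and] at hτ ⊢
    intro i h
    have : τ (e i) = e i := by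
      have := congrArg e h
      simpa using this
    exact hτ _ this
  · intro σ _; ext x; simp
  · intro τ _; ext x; simp
  · intro σ _
    simp [eln, cycleType_permCongr]

lemma derSum_eq_dS (β : Type*) [Fintype β] [DecidableEq β] :
    derSum α β = dS α (Fintype.card β) :=
  derSum_congr α (Fintype.equivFin β)

lemma sum_fix_eq (a : β) :
    ∑ σ ∈ univ.filter (fun σ : Perm β => σ a = a ∧ ∀ x, x ≠ a → σ x ≠ x), α ^ eln σ
      = dS α (Fintype.card β - 1) := by
  have hcard : Fintype.card {x : β // x ≠ a} = Fintype.card β - 1 := by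
    rw [Fintype.card_subtype_compl, Fintype.card_subtype_eq]
  rw [← hcard, ← derSum_eq_dS]
  unfold derSum
  refine Finset.sum_bij' (fun σ hσ => σ.subtypePerm (p := fun x => x ≠ a) ?_)
    (fun τ _ => Equiv.Perm.ofSubtype τ) ?_ ?_ ?_ ?_ ?_
  · simp only [mem_filter, mem_univ, true_and] at hσ
    intro x
    have hiff : σ x = a ↔ x = a := by
      constructor
      · intro h; exact σ.injective (by rw [h, hσ.1])
      · intro h; rw [h, hσ.1]
    exact not_congr hiff
  · intro σ hσ
    simp only [mem_filter, mem_univ, true_and] at hσ ⊢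
    rintro ⟨x, hx⟩ h
    have : σ x = x := congrArg Subtype.val h
    exact hσ.2 x hx this
  · intro τ hτ
    simp only [mem_filter, mem_univ, true_and] at hτ ⊢
    constructor
    · exact Equiv.Perm.ofSubtype_apply_of_not_mem τ (by simp)
    · intro x hx h
      have := Equiv.Perm.ofSubtype_apply_of_mem τ (a := x) hx
      rw [h] at this
      exact hτ ⟨x, hx⟩ (Subtype.ext this.symm)
  · intro σ hσ
    simp only [mem_filter, mem_univ, true_and] at hσ
    have hp : ∀ x : β, σ x ≠ a ↔ x ≠ a := by
      intro x
      have hiff : σ x = a ↔ x = a :=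
        ⟨fun h => σ.injective (by rw [h, hσ.1]), fun h => by rw [h, hσ.1]⟩
      exact not_congr hiff
    exact Equiv.Perm.ofSubtype_subtypePerm hp (fun x hx => fun hc => hx (by rw [hc, hσ.1]))
  · intro τ _
    exact Equiv.Perm.subtypePerm_ofSubtype τ
  · intro σ hσ
    simp only [mem_filter, mem_univ, true_and] at hσ
    have hp : ∀ x : β, σ x ≠ a ↔ x ≠ a := by
      intro x
      have hiff : σ x = a ↔ x = a :=
        ⟨fun h => σ.injective (by rw [h, hσ.1]), fun h => by rw [h, hσ.1]⟩
      exact not_congr hiff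
    have h2 : Equiv.Perm.ofSubtype (σ.subtypePerm hp) = σ :=
      Equiv.Perm.ofSubtype_subtypePerm (p := fun x => x ≠ a) hp (fun x hx => fun hc => hx (by rw [hc, hσ.1]))
    have h3 : eln (σ.subtypePerm (p := fun x => x ≠ a) hp) = eln σ := by
      conv_rhs => rw [← h2]
      simp [eln, Equiv.Perm.cycleType_ofSubtype]
    rw [show eln σ = eln (σ.subtypePerm hp) from h3.symm]

lemma eln_optionCongr (τ : Perm β) : eln (optionCongr τ) = eln τ := by
  simp [eln, cycleType_optionCongr]

lemma derSum_option :
    derSum α (Option β) =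
      (Fintype.card β : ℝ) * α * (dS α (Fintype.card β) + dS α (Fintype.card β - 1)) := by
  classical
  rw [derSum, Finset.sum_filter, Finset.univ_perm_option, Finset.sum_map]
  have hemb : ∀ x : Option β × Perm β,
      (Equiv.Perm.decomposeOption.symm.toEmbedding x : Perm (Option β)) =
        Equiv.Perm.decomposeOption.symm x := fun _ => rfl
  simp only [hemb]
  rw [Fintype.sum_prod_type, Fintype.sum_option]
  have hnone0 : ∀ τ : Perm β,
      (if ∀ i, (Equiv.Perm.decomposeOption.symm ((none : Option β), τ)) i ≠ i
        then α ^ eln (Equiv.Perm.decomposeOption.symm ((none : Option β), τ)) else 0) = 0 := by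
    intro τ
    apply if_neg
    intro h
    exact h none (by simp)
  rw [Finset.sum_congr rfl (fun τ _ => hnone0 τ), Finset.sum_const, smul_zero, zero_add]
  have key : ∀ (a : β) (τ : Perm β),
      (if ∀ i, (Equiv.Perm.decomposeOption.symm (some a, τ)) i ≠ i
        then α ^ eln (Equiv.Perm.decomposeOption.symm (some a, τ)) else 0)
      = if (∀ y, τ y = y → y = a) then α * α ^ eln τ else 0 := by
    intro a τ
    set σ : Perm (Option β) := swap none (some a) * optionCongr τ with hσdef
    have hform : (Equiv.Perm.decomposeOption.symm (some a, τ) : Perm (Option β)) = σ := by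
      simp [hσdef]
    rw [hform]
    have hnone : σ none = some a := by simp [hσdef]
    have happ : ∀ y : β, σ (some y) = if τ y = a then none else some (τ y) := by
      intro y
      have hsy : σ (some y) = swap none (some a) (some (τ y)) := by simp [hσdef]
      rw [hsy]
      by_cases h : τ y = a
      · rw [if_pos h, h, swap_apply_right]
      · rw [if_neg h, swap_apply_of_ne_of_ne (by simp) (by simpa using h)]
    have hiff : (∀ i, σ i ≠ i) ↔ (∀ y, τ y = y → y = a) := by
      constructor
      · intro h y hy
        by_contra hya
        have h2 := h (some y)
        rw [happ y] at h2
        rw [hy, if_neg hya] at h2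
        exact h2 rfl
      · intro h i
        cases i with
        | none => rw [hnone]; simp
        | some y =>
            rw [happ y]
            by_cases hy : τ y = a
            · rw [if_pos hy]; simp
            · rw [if_neg hy]
              intro hc
              have hyy : τ y = y := by simpa using hc
              have hya : y = a := h y hyy
              rw [hya] at hyy
              exact hy (by rw [hya]; exact hyy)
    have helnσ : eln σ = eln τ + 1 := by
      have h0 : σ none ≠ none := by rw [hnone]; simp
      have hs := eln_splice h0
      rw [hnone] at hs
      have h1 : swap none (some a) * σ = optionCongr τ := by
        rw [hσdef, ← mul_assoc, swap_mul_self, one_mul]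
      rw [h1, eln_optionCongr] at hs
      exact hs
    by_cases hD : ∀ y, τ y = y → y = a
    · rw [if_pos (hiff.mpr hD), if_pos hD, helnσ, pow_succ]; ring
    · rw [if_neg (fun hh => hD (hiff.mp hh)), if_neg hD]
  rw [Finset.sum_congr rfl (fun a _ => Finset.sum_congr rfl (fun τ _ => key a τ))]
  have inner : ∀ a : β,
      (∑ τ : Perm β, if (∀ y, τ y = y → y = a) then α * α ^ eln τ else 0)
        = α * (dS α (Fintype.card β) + dS α (Fintype.card β - 1)) := by
    intro a
    have e1 : (∑ τ : Perm β, if (∀ y, τ y = y → y = a) then α * α ^ eln τ else 0)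
        = α * ∑ τ ∈ univ.filter (fun τ : Perm β => ∀ y, τ y = y → y = a), α ^ eln τ := by
      rw [← Finset.sum_filter, Finset.mul_sum]
    rw [e1]
    have e2 := Finset.sum_filter_add_sum_filter_not
      (univ.filter (fun τ : Perm β => ∀ y, τ y = y → y = a))
      (fun τ : Perm β => τ a = a) (fun τ => α ^ eln τ)
    rw [Finset.filter_filter, Finset.filter_filter] at e2
    have hf1 : univ.filter (fun τ : Perm β => (∀ y, τ y = y → y = a) ∧ τ a = a)
        = univ.filter (fun τ : Perm β => τ a = a ∧ ∀ x, x ≠ a → τ x ≠ x) := by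
      apply Finset.filter_congr
      intro τ _
      constructor
      · rintro ⟨h1, h2⟩
        exact ⟨h2, fun x hx hc => hx (h1 x hc)⟩
      · rintro ⟨h1, h2⟩
        refine ⟨fun y hy => ?_, h1⟩
        by_contra hya
        exact h2 y hya hy
      -- decide?
    have hf2 : univ.filter (fun τ : Perm β => (∀ y, τ y = y → y = a) ∧ ¬ τ a = a)
        = univ.filter (fun τ : Perm β => ∀ i, τ i ≠ i) := by
      apply Finset.filter_congr
      intro τ _
      constructor
      · rintro ⟨h1, h2⟩ y hy
        have hya := h1 y hy
        rw [hya] at hy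
        exact h2 hy
      · intro h
        exact ⟨fun y hy => absurd hy (h y), h a⟩
    rw [hf1, hf2] at e2
    rw [← e2, sum_fix_eq]
    have : (∑ τ ∈ univ.filter (fun τ : Perm β => ∀ i, τ i ≠ i), α ^ eln τ)
        = dS α (Fintype.card β) := by
      rw [← derSum_eq_dS]; rfl
    rw [this]
    ring
  rw [Finset.sum_congr rfl (fun a _ => inner a), Finset.sum_const, Finset.card_univ,
    nsmul_eq_mul]
  ring

lemma dS_rec (m : ℕ) : dS α (m + 2) = ((m : ℝ) + 1) * α * (dS α (m + 1) + dS α m) := by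
  have h1 : dS α (m + 2) = derSum α (Option (Fin (m + 1))) := derSum_congr α (finSuccEquiv (m + 1))
  rw [h1, derSum_option, Fintype.card_fin, Nat.add_sub_cancel]
  push_cast
  ring

lemma dS_zero : dS α 0 = 1 := by
  rw [dS]; rw [derSum]
  have h : (univ.filter (fun σ : Perm (Fin 0) => ∀ i, σ i ≠ i)) = {1} := by
    apply Finset.eq_singleton_iff_unique_mem.mpr
    constructor
    · simp only [mem_filter, mem_univ, true_and]
      intro i; exact i.elim0
    · intro σ _; ext i; exact i.elim0
  erw [h]; rw [Finset.sum_singleton, eln_one, pow_zero]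

lemma dS_one : dS α 1 = 0 := by
  rw [dS]; rw [derSum]
  refine Finset.sum_eq_zero ?_
  intro σ hσ
  simp only [mem_filter, mem_univ, true_and] at hσ
  exact absurd (Subsingleton.elim (σ 0) 0) (hσ 0)

noncomputable def Pprod (m : ℕ) : ℝ := ∏ j ∈ Finset.range m, ((j : ℝ) * α + 1)

lemma Pprod_pos (hα : 1 ≤ α) (m : ℕ) : 0 < Pprod α m := by
  apply Finset.prod_pos
  intro j _
  have h1 : (0:ℝ) ≤ (j:ℝ) * α := by positivity
  linarith

lemma Pprod_succ (m : ℕ) : Pprod α (m + 1) = Pprod α m * ((m : ℝ) * α + 1) :=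
  Finset.prod_range_succ _ m

lemma key_ineq (hα : 1 ≤ α) :
    ∀ m, (3 ≤ m → Pprod α m ≤ 3 * dS α m) ∧ (4 ≤ m → Pprod α m < 3 * dS α m) := by
  have hα0 : (0:ℝ) < α := by linarith
  have dS2 : dS α 2 = α := by
    have h := dS_rec α 0
    rw [dS_zero, dS_one] at h
    rw [h]; ring
  have dS3 : dS α 3 = 2 * α ^ 2 := by
    have h := dS_rec α 1
    rw [dS_one, dS2] at h
    rw [h]; ring
  have dS4 : dS α 4 = 6 * α ^ 3 + 3 * α ^ 2 := by
    have h := dS_rec α 2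
    rw [dS2, dS3] at h
    rw [h]; push_cast; ring
  have P1 : Pprod α 1 = 1 := by
    rw [show (1:ℕ) = 0 + 1 from rfl, Pprod_succ, Pprod]
    simp
  have P3 : Pprod α 3 = (α + 1) * (2 * α + 1) := by
    rw [show (3:ℕ) = 1 + 1 + 1 from rfl, Pprod_succ, Pprod_succ, P1]
    push_cast; ring
  have P4 : Pprod α 4 = (α + 1) * (2 * α + 1) * (3 * α + 1) := by
    rw [show (4:ℕ) = 3 + 1 from rfl, Pprod_succ, P3]
    push_cast; ring
  have hcube : α ^ 2 ≤ α ^ 3 ∧ α ≤ α ^ 3 ∧ 1 ≤ α ^ 3 := by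
    refine ⟨?_, ?_, one_le_pow₀ hα⟩
    · nlinarith
    · nlinarith
  intro m
  induction m using Nat.strong_induction_on with
  | _ m ih =>
    rcases lt_or_ge m 4 with hm4 | hm4
    · refine ⟨?_, by omega⟩
      intro h3
      have hm3 : m = 3 := by omega
      subst hm3
      rw [P3, dS3]
      nlinarith [sq_nonneg (α - 1)]
    · rcases eq_or_lt_of_le hm4 with hm | hm5
      · have hm4' : m = 4 := hm.symm
        subst hm4'
        have hlt : Pprod α 4 < 3 * dS α 4 := by
          rw [P4, dS4]
          nlinarith [hcube.1, hcube.2.1, hcube.2.2, hα0]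
        exact ⟨fun _ => hlt.le, fun _ => hlt⟩
      · obtain ⟨k, rfl⟩ : ∃ k, m = k + 2 := ⟨m - 2, by omega⟩
        have hk3 : 3 ≤ k := by omega
        have IH1 := (ih (k + 1) (by omega)).2 (by omega)
        have IH2 := (ih k (by omega)).1 hk3
        have hpos : (0:ℝ) < ((k:ℝ) + 1) * α := by positivity
        have hstep : Pprod α (k + 2) ≤ ((k:ℝ) + 1) * α * (Pprod α (k + 1) + Pprod α k) := by
          rw [show k + 2 = (k + 1) + 1 from rfl, Pprod_succ, Pprod_succ]
          push_cast
          nlinarith [mul_nonneg (Pprod_pos α hα k).le (sub_nonneg.mpr hα), (Nat.cast_nonneg k : (0:ℝ) ≤ (k:ℝ))]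
        have hlt : Pprod α (k + 2) < 3 * dS α (k + 2) := by
          rw [dS_rec]
          calc Pprod α (k + 2) ≤ ((k:ℝ) + 1) * α * (Pprod α (k + 1) + Pprod α k) := hstep
            _ < ((k:ℝ) + 1) * α * (3 * dS α (k + 1) + 3 * dS α k) := by
                refine (mul_lt_mul_iff_right₀ hpos).mpr ?_
                linarith
            _ = 3 * (((k:ℝ) + 1) * α * (dS α (k + 1) + dS α k)) := by ring
        exact ⟨fun _ => hlt.le, fun _ => hlt⟩

lemma multiset_helper (m : Multiset ℕ) (h : ∀ x ∈ m, 1 ≤ x) :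
    (m.map (· - 1)).sum + Multiset.card m = m.sum := by
  induction m using Multiset.induction_on with
  | empty => simp
  | cons a t ih =>
      simp only [Multiset.map_cons, Multiset.sum_cons, Multiset.card_cons]
      have h1 : 1 ≤ a := h a (Multiset.mem_cons_self a t)
      have h2 := ih (fun x hx => h x (Multiset.mem_cons_of_mem hx))
      omega

lemma conjP_single {n j : ℕ} (h : j ≤ n) : conjP [n] j = 1 := by
  simp [conjP, List.filter, h]

lemma dCount_eq (n k : ℕ) :
    dCount [n] k
      = (univ.filter (fun σ : Perm (Fin n) => (∀ i, σ i ≠ i) ∧ cycleCount σ = k)).card := by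
  classical
  rw [dCount]
  have hinj : Function.Injective
      (fun σ : Perm (Fin n) => ((fun _ => 1 : Fin n → ℕ), σ)) := by
    intro a b hab
    exact congrArg Prod.snd hab
  have himg : {x | x ∈ ColoredDerangements [n] ∧ cycleCount x.2 = k}
      = (fun σ : Perm (Fin n) => ((fun _ => 1 : Fin n → ℕ), σ)) ''
          {σ : Perm (Fin n) | (∀ i, σ i ≠ i) ∧ cycleCount σ = k} := by
    ext x
    obtain ⟨c, σ⟩ := x
    simp only [ColoredDerangements, ColoredPerms, Set.mem_setOf_eq, Set.mem_image]
    constructor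
    · rintro ⟨⟨⟨h1, _h2⟩, h3⟩, h4⟩
      have hc : ∀ i : Fin n, c i = 1 := by
        intro i
        have hle := (h1 i).2
        rw [conjP_single (n := n) (j := (i : ℕ) + 1) i.2] at hle
        exact le_antisymm hle (h1 i).1
      refine ⟨σ, ⟨fun i hfix => h3 i hfix (hc i), h4⟩, ?_⟩
      simp only [Prod.mk.injEq]
      exact Prod.ext (funext fun i => (hc i).symm) rfl
    · rintro ⟨σ', ⟨hder, hcnt⟩, heq⟩
      obtain ⟨hc, hσ⟩ := Prod.mk.inj heq
      subst hc; subst hσ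
      refine ⟨⟨⟨fun i => ⟨le_refl 1, ?_⟩, fun i => rfl⟩, fun i hfix => absurd hfix (hder i)⟩, hcnt⟩
      rw [conjP_single (n := n) (j := (i : ℕ) + 1) i.2]
  rw [himg]; erw [Set.ncard_image_of_injective _ hinj]
  have hset : {σ : Perm (Fin n) | (∀ i, σ i ≠ i) ∧ cycleCount σ = k}
      = ↑(univ.filter (fun σ : Perm (Fin n) => (∀ i, σ i ≠ i) ∧ cycleCount σ = k)) := by
    ext σ; simp
  rw [hset, Set.ncard_coe_finset]

lemma JackD_eq (n : ℕ) (hn : 4 ≤ n) : JackD [n] α = dS α n := by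
  classical
  show ∑ k ∈ Finset.Icc 1 n, (dCount [n] k : ℝ) * α ^ (n - k) = dS α n
  set s := univ.filter (fun σ : Perm (Fin n) => ∀ i, σ i ≠ i) with hs
  have hcc : ∀ σ ∈ s, cycleCount σ = Multiset.card σ.cycleType := by
    intro σ hσ
    rw [hs, mem_filter] at hσ
    have : (univ.filter fun i => σ i = i) = ∅ :=
      Finset.eq_empty_iff_forall_notMem.mpr
        (fun i hi => hσ.2 i (mem_filter.mp hi).2)
    rw [cycleCount, this]
    simp
  have hsupp : ∀ σ ∈ s, σ.cycleType.sum = n := by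
    intro σ hσ
    rw [hs, mem_filter] at hσ
    rw [Equiv.Perm.sum_cycleType]
    have : σ.support = univ := Finset.eq_univ_iff_forall.mpr
      (fun i => Equiv.Perm.mem_support.mpr (hσ.2 i))
    rw [this, Finset.card_univ, Fintype.card_fin]
  have hhelp : ∀ σ ∈ s, eln σ + Multiset.card σ.cycleType = n := by
    intro σ hσ
    rw [eln, multiset_helper _ (fun x hx => (Equiv.Perm.two_le_of_mem_cycleType hx).trans' one_le_two), hsupp σ hσ]
  have hbound : ∀ σ ∈ s, cycleCount σ ∈ Finset.Icc 1 n := by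
    intro σ hσ
    rw [hcc σ hσ, Finset.mem_Icc]
    have h1 : σ ≠ 1 := by
      intro h1
      rw [hs, mem_filter] at hσ
      exact hσ.2 ⟨0, by omega⟩ (by rw [h1]; rfl)
    have := hhelp σ hσ
    have hpos : 0 < Multiset.card σ.cycleType := Equiv.Perm.card_cycleType_pos.mpr h1
    omega
  have hexp : ∀ σ ∈ s, n - cycleCount σ = eln σ := by
    intro σ hσ
    have := hhelp σ hσ
    rw [hcc σ hσ]
    omega
  calc ∑ k ∈ Finset.Icc 1 n, (dCount [n] k : ℝ) * α ^ (n - k)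
      = ∑ k ∈ Finset.Icc 1 n, ∑ σ ∈ s.filter (fun σ => cycleCount σ = k),
          α ^ (n - cycleCount σ) := by
        refine Finset.sum_congr rfl ?_
        intro k _
        rw [dCount_eq]
        have hff : univ.filter (fun σ : Perm (Fin n) => (∀ i, σ i ≠ i) ∧ cycleCount σ = k)
            = s.filter (fun σ => cycleCount σ = k) := by
          rw [hs, Finset.filter_filter]
        rw [hff]
        rw [Finset.sum_congr rfl
          (fun σ hσ => by rw [(Finset.mem_filter.mp hσ).2])]
        rw [Finset.sum_const, nsmul_eq_mul]
    _ = ∑ σ ∈ s, α ^ (n - cycleCount σ) := Finset.sum_fiberwise_of_maps_to hbound _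
    _ = ∑ σ ∈ s, α ^ eln σ := Finset.sum_congr rfl (fun σ hσ => by rw [hexp σ hσ])
    _ = dS α n := by
        rw [hs]
        show _ = derSum α (Fin n)
        rw [derSum]
        exact Finset.sum_congr (by convert rfl) (fun _ _ => rfl)

lemma prod_hook (n : ℕ) :
    ∏ i ∈ Finset.Icc 1 n, (α * ((n : ℝ) - (i : ℝ)) + 1) = Pprod α n := by
  rw [Pprod]
  refine Finset.prod_nbij' (fun i => n - i) (fun j => n - j) ?_ ?_ ?_ ?_ ?_
  · intro i hi
    rw [Finset.mem_Icc] at hi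
    show n - i ∈ Finset.range n
    rw [Finset.mem_range]
    omega
  · intro j hj
    rw [Finset.mem_range] at hj
    show n - j ∈ Finset.Icc 1 n
    rw [Finset.mem_Icc]
    omega
  · intro i hi
    rw [Finset.mem_Icc] at hi
    show n - (n - i) = i
    omega
  · intro j hj
    rw [Finset.mem_range] at hj
    show n - (n - j) = j
    omega
  · intro i hi
    rw [Finset.mem_Icc] at hi
    show α * ((n : ℝ) - (i : ℝ)) + 1 = ((n - i : ℕ) : ℝ) * α + 1
    have hcast : ((n - i : ℕ) : ℝ) = (n : ℝ) - (i : ℝ) := by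
      push_cast [hi.2]
      ring
    rw [hcast]
    ring

/-- `3 · D^{(n)}_α > Π_{i=1}^{n} (α(n − i) + 1)` for `α ≥ 1`, `n ≥ 4`. -/
theorem one_row_lower_bound (n : ℕ) (hn : 4 ≤ n) (α : ℝ) (hα : 1 ≤ α) :
    ∏ i ∈ Finset.Icc 1 n, (α * ((n : ℝ) - (i : ℝ)) + 1) < 3 * JackD [n] α := by
  rw [prod_hook α n, JackD_eq α n hn]
  exact (key_ineq α hα n).2 hn
end

section
/- For every integer n ≥ 2 and every real α, the Jack derangement numbers of the shapes (n) and (n−1, 1) satisfy D^{(n)}_α = α(n − 1) · D^{(n−1,1)}_α. -/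
open Finset

section JackAux
open Equiv Equiv.Perm
set_option linter.unusedSectionVars false
set_option linter.unusedVariables false
variable {β : Type*} [DecidableEq β] [Fintype β]

noncomputable def wt {β : Type*} [DecidableEq β] [Fintype β] (σ : Perm β) : ℕ :=
  (σ.cycleType.map (fun i => i - 1)).sum

lemma wt_disjoint_mul {σ τ : Perm β} (h : Perm.Disjoint σ τ) :
    wt (σ * τ) = wt σ + wt τ := by simp [wt, h.cycleType_mul]

lemma wt_isCycle {c : Perm β} (hc : c.IsCycle) : wt c = c.support.card - 1 := by
  simp [wt, hc.cycleType]

lemma cycleOf_mul_disjoint (σ : Perm β) (a : β) :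
    σ = σ.cycleOf a * ((σ.cycleOf a)⁻¹ * σ) ∧
      Perm.Disjoint (σ.cycleOf a) ((σ.cycleOf a)⁻¹ * σ) ∧
      ∀ x, σ.SameCycle a x → ((σ.cycleOf a)⁻¹ * σ) x = x := by
  refine ⟨by group, ?_, ?_⟩
  · intro x
    by_cases hx : σ.SameCycle a x
    · right
      rw [mul_apply, cycleOf_inv, SameCycle.cycleOf_apply (by simpa using hx.apply_right),
        ← mul_apply, inv_mul_cancel, one_apply]
    · left
      exact cycleOf_apply_of_not_sameCycle hx
  · intro x hx
    rw [mul_apply, cycleOf_inv, SameCycle.cycleOf_apply (by simpa using hx.apply_right),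
      ← mul_apply, inv_mul_cancel, one_apply]

/-- Key deletion lemma: removing `a` from its cycle decreases the weight by 1. -/
lemma wt_swap_mul {σ : Perm β} {a : β} (ha : σ a ≠ a) :
    wt (swap a (σ a) * σ) + 1 = wt σ := by
  set c := σ.cycleOf a with hcdef
  obtain ⟨hdec, hdisj, hfix⟩ := cycleOf_mul_disjoint σ a
  set h := c⁻¹ * σ with hhdef
  have hca : c a = σ a := cycleOf_apply_self σ a
  have hcc : c.IsCycle := isCycle_cycleOf σ ha
  have hwtσ : wt σ = (c.support.card - 1) + wt h := by
    conv_lhs => rw [hdec]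
    rw [wt_disjoint_mul hdisj, wt_isCycle hcc]
  have hasupp : a ∈ c.support := by
    rw [mem_support, hca]; exact ha
  by_cases h2 : σ (σ a) = a
  · -- the cycle of a is the transposition (a, σ a)
    have hcswap : c = swap a (σ a) := by
      have := hcc.eq_swap_of_apply_apply_eq_self (x := a) (by rwa [hca])
        (by rw [hca, cycleOf_apply_apply_self]; exact h2)
      rwa [hca] at this
    have : swap a (σ a) * σ = h := by
      rw [hhdef, hcswap, swap_inv]
    rw [this, hwtσ, hcswap, card_support_swap ha.symm]; omega
  · -- cycle of length ≥ 3 :  swap a (σ a) * c is a cycle on support c \ {a}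
    have hcsa : c (σ a) = σ (σ a) := cycleOf_apply_apply_self σ a
    have hc'c : swap a (σ a) * σ = (swap a (c a) * c) * h := by
      rw [hca, mul_assoc, ← hdec]
    have hcyc' : IsCycle (swap a (c a) * c) := by
      refine hcc.swap_mul ?_ ?_
      · rw [hca]; exact ha
      · rw [hca, hcsa]; exact h2
    have hsacsupp : σ a ∈ c.support := by
      rw [mem_support, hcsa]
      intro hh; exact ha (σ.injective hh)
    have hsupp' : (swap a (c a) * c).support = c.support.erase a := by
      ext x
      simp only [mem_erase, mem_support, mul_apply]
      constructor
      · intro hx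
        constructor
        · rintro rfl
          rw [hca, swap_apply_right] at hx; exact hx rfl
        · intro hcx
          apply hx
          rw [hcx, swap_apply_of_ne_of_ne]
          · rintro rfl; rw [hca] at hcx; exact ha hcx
          · rw [hca]; rintro rfl; rw [← hca] at hcx
            exact (mem_support.mp hsacsupp) (by rw [← hca, hcx])
      · rintro ⟨hxa, hcx⟩
        by_cases hcxa : c x = a
        · rw [hcxa, swap_apply_left, hca]
          intro hh
          apply h2
          rw [← hh] at hcxa
          rw [← hcsa, hcxa]
        · rw [swap_apply_of_ne_of_ne hcxa]
          · exact hcx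
          · rw [hca]; intro hh
            apply hxa
            apply c.injective; rw [hh, hca]
    have hdisj' : Perm.Disjoint (swap a (c a) * c) h := by
      intro x
      rcases hdisj x with hx | hx
      · left
        rw [mul_apply, hx, swap_apply_of_ne_of_ne]
        · rintro rfl; exact (mem_support.mp hasupp) hx
        · rw [hca]; rintro rfl; exact (mem_support.mp hsacsupp) hx
      · right; exact hx
    have hcard : 2 ≤ c.support.card := hcc.two_le_card_support
    rw [hc'c, wt_disjoint_mul hdisj', wt_isCycle hcyc', hsupp', card_erase_of_mem hasupp, hwtσ]
    omega


def finSuccNeZeroEquiv (n : ℕ) : Fin n ≃ {x : Fin (n + 1) // x ≠ 0} where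
  toFun i := ⟨i.succ, Fin.succ_ne_zero i⟩
  invFun x := x.1.pred x.2
  left_inv i := by simp
  right_inv x := by simp

lemma decomposeFin_zero_eq (n : ℕ) (e : Perm (Fin n)) :
    Equiv.Perm.decomposeFin.symm (0, e) = e.extendDomain (finSuccNeZeroEquiv n) := by
  refine Equiv.ext fun x => ?_
  cases x using Fin.cases with
  | zero =>
    rw [Equiv.Perm.decomposeFin_symm_apply_zero,
      Perm.extendDomain_apply_not_subtype _ _ (by simp)]
  | succ i =>
    rw [Equiv.Perm.decomposeFin_symm_apply_succ]
    have h1 : ((finSuccNeZeroEquiv n) i : Fin (n+1)) = i.succ := rfl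
    rw [← h1, Perm.extendDomain_apply_image]
    simp [finSuccNeZeroEquiv]

lemma wt_decomposeFin_zero {n : ℕ} (e : Perm (Fin n)) :
    wt (Equiv.Perm.decomposeFin.symm (0, e)) = wt e := by
  rw [decomposeFin_zero_eq]
  unfold wt
  rw [Equiv.Perm.cycleType_extendDomain]

lemma wt_decomposeFin {n : ℕ} (p : Fin (n + 1)) (hp : p ≠ 0) (e : Perm (Fin n)) :
    wt (Equiv.Perm.decomposeFin.symm (p, e)) = wt e + 1 := by
  set σ := Equiv.Perm.decomposeFin.symm (p, e) with hσ
  have hσ0 : σ 0 = p := Equiv.Perm.decomposeFin_symm_apply_zero p e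
  have key : swap 0 (σ 0) * σ = Equiv.Perm.decomposeFin.symm (0, e) := by
    refine Equiv.ext fun x => ?_
    rw [hσ0]
    cases x using Fin.cases with
    | zero =>
      rw [Equiv.Perm.decomposeFin_symm_apply_zero, mul_apply, hσ0, swap_apply_right]
    | succ i =>
      rw [Equiv.Perm.decomposeFin_symm_apply_succ, mul_apply, hσ,
        Equiv.Perm.decomposeFin_symm_apply_succ, swap_apply_self, Equiv.swap_self,
        Equiv.refl_apply]
  have h0 : σ 0 ≠ 0 := by rw [hσ0]; exact hp
  have := wt_swap_mul h0
  rw [key, wt_decomposeFin_zero] at this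
  omega

noncomputable def Psum (β : Type*) [DecidableEq β] [Fintype β] (α : ℝ) : ℝ :=
  ∑ σ : Perm β, α ^ wt σ

lemma Psum_succ (n : ℕ) (α : ℝ) :
    Psum (Fin (n + 1)) α = (1 + n * α) * Psum (Fin n) α := by
  unfold Psum
  rw [← Equiv.sum_comp (Equiv.Perm.decomposeFin (n := n)).symm (fun σ => α ^ wt σ)]
  rw [Fintype.sum_prod_type, Fin.sum_univ_succ]
  have h1 : ∀ e : Perm (Fin n), α ^ wt (Equiv.Perm.decomposeFin.symm ((0 : Fin (n+1)), e))
      = α ^ wt e := fun e => by rw [wt_decomposeFin_zero]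
  have h2 : ∀ (i : Fin n) (e : Perm (Fin n)),
      α ^ wt (Equiv.Perm.decomposeFin.symm (i.succ, e)) = α * α ^ wt e := fun i e => by
    rw [wt_decomposeFin i.succ (Fin.succ_ne_zero i), pow_succ, mul_comm]
  rw [sum_congr rfl (fun e _ => h1 e)]
  have : ∀ i : Fin n, ∑ e : Perm (Fin n),
      α ^ wt (Equiv.Perm.decomposeFin.symm (i.succ, e)) = α * ∑ e : Perm (Fin n), α ^ wt e := by
    intro i
    rw [mul_sum, sum_congr rfl (fun e _ => h2 i e)]
  rw [sum_congr rfl (fun i _ => this i), sum_const, card_univ, Fintype.card_fin]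
  ring

lemma Psum_fin (m : ℕ) (α : ℝ) :
    Psum (Fin m) α = ∏ i ∈ range m, (1 + i * α) := by
  induction m with
  | zero =>
    rw [range_zero, prod_empty]
    unfold Psum
    rw [Fintype.sum_eq_single 1 (fun σ hσ => absurd (Subsingleton.elim σ 1) hσ)]
    simp [wt]
  | succ n ih =>
    rw [Psum_succ, ih, prod_range_succ]
    ring

lemma wt_permCongr {β γ : Type*} [DecidableEq β] [Fintype β] [DecidableEq γ] [Fintype γ]
    (e : β ≃ γ) (σ : Perm β) : wt (e.permCongr σ) = wt σ := by
  classical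
  have : e.permCongr σ = σ.extendDomain
      (e.trans (Equiv.subtypeUnivEquiv (fun _ : γ => trivial)).symm) := by
    ext x
    rw [Perm.extendDomain_apply_subtype _ _ trivial]
    simp
  rw [this]
  unfold wt
  rw [Equiv.Perm.cycleType_extendDomain]

lemma Psum_congr {β γ : Type*} [DecidableEq β] [Fintype β] [DecidableEq γ] [Fintype γ]
    (e : β ≃ γ) (α : ℝ) : Psum β α = Psum γ α := by
  unfold Psum
  rw [← Equiv.sum_comp (e.permCongr) (fun σ => α ^ wt σ)]
  exact sum_congr rfl fun σ _ => by rw [wt_permCongr]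

lemma Psum_eq_prod (β : Type*) [DecidableEq β] [Fintype β] (α : ℝ) :
    Psum β α = ∏ i ∈ range (Fintype.card β), (1 + i * α) := by
  rw [Psum_congr (Fintype.equivFin β), Psum_fin]


variable {β : Type*} [DecidableEq β] [Fintype β]

noncomputable def Esum (β : Type*) [DecidableEq β] [Fintype β] (α : ℝ) : ℝ :=
  ∑ σ ∈ univ.filter (fun σ : Perm β => ∀ i, σ i ≠ i), α ^ wt σ

noncomputable def Qprod (m : ℕ) (α : ℝ) : ℝ := ∏ i ∈ range m, (1 + i * α)

noncomputable def Fpoly (N : ℕ) (α : ℝ) : ℝ :=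
  ∑ j ∈ range (N + 1), (-1 : ℝ) ^ j * (N.choose j) * Qprod (N - j) α

lemma wt_ofSubtype {p : β → Prop} [DecidablePred p] (τ : Perm (Subtype p)) :
    wt (Perm.ofSubtype τ) = wt τ := by
  unfold wt; rw [Equiv.Perm.cycleType_ofSubtype]

lemma mem_iff_of_fixing {p : β → Prop} {σ : Perm β} (hσ : ∀ i, ¬ p i → σ i = i) :
    ∀ x, p x ↔ p (σ x) := by
  intro x
  constructor
  · intro hx
    by_contra hc
    have h1 : σ (σ x) = σ x := hσ _ hc
    have h2 : σ x = x := σ.injective h1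
    rw [h2] at hc; exact hc hx
  · intro hx
    by_contra hc
    rw [hσ _ hc] at hx; exact hc hx

lemma ofSubtype_subtypePerm_eq {p : β → Prop} [DecidablePred p] {σ : Perm β}
    (hσ : ∀ i, ¬ p i → σ i = i) :
    Perm.ofSubtype (σ.subtypePerm (fun x => (mem_iff_of_fixing hσ x).symm)) = σ := by
  refine Equiv.ext fun x => ?_
  by_cases hx : p x
  · rw [Perm.ofSubtype_subtypePerm_of_mem _ hx]
  · rw [Perm.ofSubtype_apply_of_not_mem _ hx, hσ _ hx]

lemma wt_subtypePerm {p : β → Prop} [DecidablePred p] {σ : Perm β}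
    (hσ : ∀ i, ¬ p i → σ i = i) :
    wt (σ.subtypePerm (fun x => (mem_iff_of_fixing hσ x).symm)) = wt σ := by
  conv_rhs => rw [← ofSubtype_subtypePerm_eq hσ]
  rw [wt_ofSubtype]

lemma sum_fixing_eq_psum (p : β → Prop) [DecidablePred p] (α : ℝ) :
    ∑ σ ∈ univ.filter (fun σ : Perm β => ∀ i, ¬ p i → σ i = i), α ^ wt σ
      = Psum (Subtype p) α := by
  unfold Psum
  refine Finset.sum_bij'
    (fun σ hσ => σ.subtypePerm (fun x => (mem_iff_of_fixing (by simpa using hσ) x).symm))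
    (fun τ _ => Perm.ofSubtype τ) (fun σ hσ => mem_univ _) ?_ ?_ ?_ ?_
  · intro τ _
    simp only [mem_filter, mem_univ, true_and]
    intro i hi
    exact Perm.ofSubtype_apply_of_not_mem τ hi
  · intro σ hσ
    exact ofSubtype_subtypePerm_eq (show ∀ i, ¬ p i → σ i = i by simpa using hσ)
  · intro τ _
    exact Perm.subtypePerm_ofSubtype τ
  · intro σ hσ
    rw [wt_subtypePerm (show ∀ i, ¬ p i → σ i = i by simpa using hσ)]

lemma sum_fixing_derangement_eq_esum (p : β → Prop) [DecidablePred p] (α : ℝ) :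
    ∑ σ ∈ univ.filter
        (fun σ : Perm β => (∀ i, ¬ p i → σ i = i) ∧ ∀ i, p i → σ i ≠ i), α ^ wt σ
      = Esum (Subtype p) α := by
  unfold Esum
  refine Finset.sum_bij'
    (fun σ hσ => σ.subtypePerm (fun x => (mem_iff_of_fixing (by
      simp only [mem_filter, mem_univ, true_and] at hσ; exact hσ.1) x).symm))
    (fun τ _ => Perm.ofSubtype τ) ?_ ?_ ?_ ?_ ?_
  · intro σ hσ
    simp only [mem_filter, mem_univ, true_and] at hσ ⊢
    intro x
    intro hc
    have := congrArg Subtype.val hc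
    simp only [Perm.subtypePerm_apply] at this
    exact hσ.2 x.1 x.2 this
  · intro τ hτ
    simp only [mem_filter, mem_univ, true_and] at hτ ⊢
    constructor
    · intro i hi
      exact Perm.ofSubtype_apply_of_not_mem τ hi
    · intro i hi hc
      rw [Perm.ofSubtype_apply_of_mem τ hi] at hc
      exact hτ ⟨i, hi⟩ (Subtype.ext hc)
  · intro σ hσ
    exact ofSubtype_subtypePerm_eq (show ∀ i, ¬ p i → σ i = i by
      simp only [mem_filter, mem_univ, true_and] at hσ; exact hσ.1)
  · intro τ _
    exact Perm.subtypePerm_ofSubtype τ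
  · intro σ hσ
    rw [wt_subtypePerm (show ∀ i, ¬ p i → σ i = i by
      simp only [mem_filter, mem_univ, true_and] at hσ; exact hσ.1)]

/-- Inclusion–exclusion: `Esum β α = Fpoly (card β) α`. -/
lemma esum_eq_fpoly (α : ℝ) : Esum β α = Fpoly (Fintype.card β) α := by
  classical
  set n := Fintype.card β
  have step1 : Esum β α
      = ∑ σ : Perm β, (((∑ F ∈ (univ.filter fun i => σ i = i).powerset,
          (-1 : ℤ) ^ F.card) : ℤ) : ℝ) * α ^ wt σ := by
    unfold Esum
    rw [Finset.sum_filter]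
    refine Finset.sum_congr rfl fun σ _ => ?_
    rw [Finset.sum_powerset_neg_one_pow_card]
    by_cases h : ∀ i, σ i ≠ i
    · rw [if_pos h, if_pos, Int.cast_one, one_mul]
      rw [Finset.filter_eq_empty_iff]
      intro i _
      exact h i
    · rw [if_neg h, if_neg, Int.cast_zero, zero_mul]
      rw [Finset.filter_eq_empty_iff]
      push_neg at h ⊢
      obtain ⟨i, hi⟩ := h
      exact ⟨i, mem_univ i, hi⟩
  rw [step1]
  have step2 : ∀ σ : Perm β, (((∑ F ∈ (univ.filter fun i => σ i = i).powerset,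
        (-1 : ℤ) ^ F.card) : ℤ) : ℝ) * α ^ wt σ
      = ∑ F ∈ (univ : Finset β).powerset,
          (if F ⊆ univ.filter (fun i => σ i = i) then (-1 : ℝ) ^ F.card * α ^ wt σ else 0) := by
    intro σ
    push_cast
    rw [Finset.sum_mul]
    rw [← Finset.sum_filter]
    refine Finset.sum_congr ?_ (fun F _ => rfl)
    ext F
    simp [Finset.mem_powerset]
  rw [Finset.sum_congr rfl fun σ _ => step2 σ]
  rw [Finset.sum_comm]
  have step3 : ∀ F : Finset β, F ∈ (univ : Finset β).powerset →
      (∑ σ : Perm β, if F ⊆ univ.filter (fun i => σ i = i)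
          then (-1 : ℝ) ^ F.card * α ^ wt σ else 0)
      = (-1 : ℝ) ^ F.card * Qprod (n - F.card) α := by
    intro F _
    rw [← Finset.sum_filter]
    have hsub : ∀ σ : Perm β, (F ⊆ univ.filter fun i => σ i = i) ↔ (∀ i, ¬ i ∉ F → σ i = i) := by
      intro σ
      constructor
      · intro h i hi
        have := h (by simpa using hi)
        simpa using this
      · intro h i hi
        simp only [mem_filter, mem_univ, true_and]
        exact h i (by simpa using hi)
    rw [Finset.filter_congr fun σ _ => by rw [hsub]]
    rw [← Finset.mul_sum]
    rw [sum_fixing_eq_psum (fun i => i ∉ F) α, Psum_eq_prod]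
    have hcard : Fintype.card {x : β // x ∉ F} = n - F.card := by
      rw [Fintype.card_subtype_compl, Fintype.card_coe]
    rw [hcard]
    rfl
  rw [Finset.sum_congr rfl step3]
  have := Finset.sum_powerset_apply_card
    (f := fun m => (-1 : ℝ) ^ m * Qprod (n - m) α) (x := (univ : Finset β))
  rw [this, card_univ]
  unfold Fpoly
  refine Finset.sum_congr rfl fun j _ => ?_
  rw [nsmul_eq_mul]
  ring


noncomputable def Apoly (N : ℕ) (α : ℝ) : ℝ :=
  ∑ j ∈ range (N + 1), (-1 : ℝ) ^ j * (N.choose j) * Qprod (N + 1 - j) α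

lemma Qprod_succ (m : ℕ) (α : ℝ) : Qprod (m + 1) α = Qprod m α * (1 + m * α) := by
  unfold Qprod; rw [prod_range_succ]

lemma apoly_eq (N : ℕ) (α : ℝ) :
    Apoly N α = Qprod (N + 1) α
      - ∑ i ∈ range N, (-1 : ℝ) ^ i * (N.choose (i + 1)) * Qprod (N - i) α := by
  unfold Apoly
  rw [Finset.sum_range_succ' _ N]
  have h : ∀ i ∈ range N, (-1 : ℝ) ^ (i + 1) * (N.choose (i + 1)) * Qprod (N + 1 - (i + 1)) α
      = -((-1 : ℝ) ^ i * (N.choose (i + 1)) * Qprod (N - i) α) := by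
    intro i _
    rw [Nat.succ_sub_succ]
    ring
  rw [sum_congr rfl h, Finset.sum_neg_distrib]
  simp
  ring

lemma sum_drop (N : ℕ) (α : ℝ) :
    ∑ i ∈ range (N + 1), (-1 : ℝ) ^ i * (N.choose (i + 1)) * Qprod (N - i) α
      = ∑ i ∈ range N, (-1 : ℝ) ^ i * (N.choose (i + 1)) * Qprod (N - i) α := by
  rw [Finset.sum_range_succ, Nat.choose_eq_zero_of_lt (by omega)]
  simp

lemma fpoly_succ (N : ℕ) (α : ℝ) : Fpoly (N + 1) α = Apoly N α - Fpoly N α := by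
  have hterm : ∀ i ∈ range (N + 1),
      (-1 : ℝ) ^ (i + 1) * ((N + 1).choose (i + 1)) * Qprod (N + 1 - (i + 1)) α
      = -((-1 : ℝ) ^ i * (N.choose i) * Qprod (N - i) α)
        + -((-1 : ℝ) ^ i * (N.choose (i + 1)) * Qprod (N - i) α) := by
    intro i _
    rw [Nat.succ_sub_succ, Nat.choose_succ_succ]
    push_cast
    ring
  have e1 : Fpoly (N + 1) α
      = -(Fpoly N α) - (∑ i ∈ range N, (-1 : ℝ) ^ i * (N.choose (i + 1)) * Qprod (N - i) α)
        + Qprod (N + 1) α := by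
    unfold Fpoly
    rw [Finset.sum_range_succ' _ (N + 1), sum_congr rfl hterm, Finset.sum_add_distrib,
      Finset.sum_neg_distrib, Finset.sum_neg_distrib, sum_drop]
    simp
    ring
  rw [e1, apoly_eq]
  ring

lemma apoly_sub (M : ℕ) (α : ℝ) :
    Apoly (M + 1) α - Fpoly (M + 1) α = α * (M + 1) * Apoly M α := by
  unfold Apoly Fpoly
  rw [← Finset.sum_sub_distrib]
  have hterm : ∀ j ∈ range (M + 2),
      (-1 : ℝ) ^ j * ((M + 1).choose j) * Qprod (M + 1 + 1 - j) α
        - (-1 : ℝ) ^ j * ((M + 1).choose j) * Qprod (M + 1 - j) α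
      = α * (M + 1) * ((-1 : ℝ) ^ j * (M.choose j) * Qprod (M + 1 - j) α) := by
    intro j hj
    rw [mem_range] at hj
    have h1 : M + 1 + 1 - j = (M + 1 - j) + 1 := by omega
    rw [h1, Qprod_succ]
    have h2 : ((M + 1).choose j) * (M + 1 - j) = (M + 1) * M.choose j := by
      rw [← Nat.choose_succ_right_eq, Nat.add_one_mul_choose_eq]
    have h2' : ((M + 1).choose j : ℝ) * ((M + 1 - j : ℕ) : ℝ) = ((M : ℝ) + 1) * (M.choose j : ℝ) := by
      exact_mod_cast congrArg (Nat.cast (R := ℝ)) h2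
    linear_combination ((-1 : ℝ) ^ j * Qprod (M + 1 - j) α * α) * h2'
  rw [sum_congr rfl hterm, ← Finset.mul_sum]
  congr 1
  rw [Finset.sum_range_succ, Nat.choose_eq_zero_of_lt (by omega)]
  simp

lemma fpoly_rec (M : ℕ) (α : ℝ) :
    Fpoly (M + 2) α = α * (M + 1) * (Fpoly (M + 1) α + Fpoly M α) := by
  have h1 := fpoly_succ (M + 1) α
  have h2 := apoly_sub M α
  have h3 := fpoly_succ M α
  have : Fpoly (M + 2) α = α * (M + 1) * Apoly M α := by
    rw [h1]
    linarith [h2]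
  rw [this]
  have : Apoly M α = Fpoly (M + 1) α + Fpoly M α := by linarith [h3]
  rw [this]



lemma wt_add_card (σ : Perm (Fin m)) :
    wt σ + Multiset.card σ.cycleType = σ.cycleType.sum := by
  unfold wt
  have h : ∀ s : Multiset ℕ, (∀ x ∈ s, 1 ≤ x) →
      (s.map (fun i => i - 1)).sum + Multiset.card s = s.sum := by
    intro s
    induction s using Multiset.induction with
    | empty => simp
    | cons a t ih =>
      intro h
      simp only [Multiset.map_cons, Multiset.sum_cons, Multiset.card_cons]
      rw [← ih (fun x hx => h x (Multiset.mem_cons_of_mem hx))]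
      have := h a (Multiset.mem_cons_self a t)
      omega
  exact h _ (fun x hx => le_of_lt (Equiv.Perm.one_lt_of_mem_cycleType hx))

lemma fix_card_eq (σ : Perm (Fin m)) :
    (univ.filter fun i => σ i = i).card = m - σ.support.card := by
  have h := Finset.card_filter_add_card_filter_not
    (s := (univ : Finset (Fin m))) (p := fun i => σ i = i)
  have hsupp : σ.support = univ.filter fun i => ¬ σ i = i := by
    ext i; simp [Equiv.Perm.mem_support]
  rw [← hsupp] at h
  rw [card_univ, Fintype.card_fin] at h
  omega

lemma support_le_card (σ : Perm (Fin m)) : σ.support.card ≤ m := by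
  calc σ.support.card ≤ (univ : Finset (Fin m)).card := card_le_card (subset_univ _)
  _ = m := by rw [card_univ, Fintype.card_fin]

lemma card_le_sum_cycleType (σ : Perm (Fin m)) :
    Multiset.card σ.cycleType ≤ σ.cycleType.sum := by
  have := wt_add_card σ
  omega

lemma sub_cycleCount (σ : Perm (Fin m)) : m - cycleCount σ = wt σ := by
  have h1 := wt_add_card σ
  have h2 := fix_card_eq σ
  have h3 := σ.sum_cycleType
  have h4 := support_le_card σ
  unfold cycleCount
  omega

lemma cycleCount_le (σ : Perm (Fin m)) : cycleCount σ ≤ m := by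
  have h1 := card_le_sum_cycleType σ
  have h2 := fix_card_eq σ
  have h3 := σ.sum_cycleType
  have h4 := support_le_card σ
  unfold cycleCount
  omega

lemma one_le_cycleCount (hm : 1 ≤ m) (σ : Perm (Fin m)) : 1 ≤ cycleCount σ := by
  unfold cycleCount
  by_cases h : σ = 1
  · subst h
    have : (univ.filter fun i => (1 : Perm (Fin m)) i = i) = univ := by
      simp
    rw [this, card_univ, Fintype.card_fin]
    omega
  · have := Equiv.Perm.card_cycleType_pos.mpr h
    omega

lemma regroup (m : ℕ) (hm : 1 ≤ m) (P : Perm (Fin m) → Prop) [DecidablePred P] (α : ℝ) :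
    ∑ k ∈ Icc 1 m, ((univ.filter fun σ => P σ ∧ cycleCount σ = k).card : ℝ) * α ^ (m - k)
      = ∑ σ ∈ univ.filter P, α ^ wt σ := by
  rw [← Finset.sum_fiberwise_of_maps_to (g := cycleCount) (t := Icc 1 m)
    (fun σ _ => by rw [mem_Icc]; exact ⟨one_le_cycleCount hm σ, cycleCount_le σ⟩)
    (fun σ => α ^ wt σ)]
  refine Finset.sum_congr rfl fun k _ => ?_
  rw [Finset.filter_filter]
  have : ∀ σ ∈ univ.filter fun σ => P σ ∧ cycleCount σ = k,
      α ^ wt σ = α ^ (m - k) := by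
    intro σ hσ
    rw [mem_filter] at hσ
    rw [← sub_cycleCount σ, hσ.2.2]
  rw [Finset.sum_congr rfl this, Finset.sum_const, nsmul_eq_mul]


lemma conjP_single_s15 (n j : ℕ) : conjP [n] j = if j ≤ n then 1 else 0 := by
  by_cases h : j ≤ n <;> simp [conjP, List.filter_cons, h]

lemma conjP_pair (a j : ℕ) :
    conjP [a, 1] j = (if j ≤ a then 1 else 0) + (if j ≤ 1 then 1 else 0) := by
  by_cases h : j ≤ a <;> by_cases h' : j ≤ 1 <;> simp [conjP, List.filter_cons, h, h']

open scoped Classical in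
lemma dCount_single (n : ℕ) (hn : 2 ≤ n) (k : ℕ) :
    dCount [n] k
      = (univ.filter fun σ : Perm (Fin n) => (∀ i, σ i ≠ i) ∧ cycleCount σ = k).card := by
  unfold dCount
  have hset : {x | x ∈ ColoredDerangements [n] ∧ cycleCount x.2 = k}
      = (fun σ : Perm (Fin n) => (fun _ : Fin n => 1, σ)) ''
          {σ : Perm (Fin n) | (∀ i, σ i ≠ i) ∧ cycleCount σ = k} := by
    ext ⟨c, σ⟩
    simp only [Set.mem_setOf_eq, Set.mem_image, ColoredDerangements, ColoredPerms]
    constructor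
    · rintro ⟨⟨⟨hc, _hmono⟩, hder⟩, hcc⟩
      have hc1 : ∀ i : Fin n, c i = 1 := by
        intro i
        have h := hc i
        have hlt : (i : ℕ) < n := i.2
        have h2 : conjP [n] (i.1 + 1) = 1 := by
          rw [conjP_single_s15, if_pos (by omega)]
        omega
      refine ⟨σ, ⟨fun i hi => hder i hi (hc1 i), hcc⟩, ?_⟩
      refine Prod.ext ?_ rfl
      funext i
      exact (hc1 i).symm
    · rintro ⟨σ', ⟨hder, hcc⟩, heq⟩
      injection heq with hc hσ
      subst hσ
      subst hc
      refine ⟨⟨⟨fun i => ⟨le_refl 1, ?_⟩, fun i => rfl⟩,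
        fun i hi => absurd hi (hder i)⟩, hcc⟩
      have hlt : (i : ℕ) < n := i.2
      rw [conjP_single_s15, if_pos (by omega)]
    -- end hset
  rw [hset]
  refine (Set.ncard_image_of_injective _ (fun a b h => (Prod.ext_iff.mp h).2)).trans ?_
  have h2 : {σ : Perm (Fin n) | (∀ i, σ i ≠ i) ∧ cycleCount σ = k}
      = ↑(univ.filter fun σ : Perm (Fin n) => (∀ i, σ i ≠ i) ∧ cycleCount σ = k) := by
    ext σ; simp
  rw [h2, Set.ncard_coe_finset]

open scoped Classical in
lemma dCount_hook (m : ℕ) (hm : 1 ≤ m) (k : ℕ) :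
    dCount [m, 1] k
      = (univ.filter fun σ : Perm (Fin m) => (∀ i, σ i ≠ i) ∧ cycleCount σ = k).card
        + (univ.filter fun σ : Perm (Fin m) =>
            ((∀ i, ¬ i ≠ (⟨0, hm⟩ : Fin m) → σ i = i) ∧ ∀ i, i ≠ (⟨0, hm⟩ : Fin m) → σ i ≠ i)
              ∧ cycleCount σ = k).card := by
  set z : Fin m := ⟨0, hm⟩ with hz
  set c2 : Fin m → ℕ := fun i => if i = z then 2 else 1 with hc2
  have hconj : ∀ i : Fin m, conjP [m, 1] (i.1 + 1) = if i = z then 2 else 1 := by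
    intro i
    rw [conjP_pair]
    have : i = z ↔ i.1 = 0 := by rw [Fin.ext_iff]
    by_cases h : i = z
    · have h0 : i.1 = 0 := this.mp h
      rw [if_pos h, if_pos (by omega), if_pos (by omega)]
    · have h0 : i.1 ≠ 0 := fun hh => h (this.mpr hh)
      rw [if_neg h, if_pos (by omega), if_neg (by omega)]
  unfold dCount
  have hset : {x | x ∈ ColoredDerangements [m, 1] ∧ cycleCount x.2 = k}
      = ((fun σ : Perm (Fin m) => (fun _ : Fin m => 1, σ)) ''
          {σ : Perm (Fin m) | (∀ i, σ i ≠ i) ∧ cycleCount σ = k})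
        ∪ ((fun σ : Perm (Fin m) => (c2, σ)) ''
          {σ : Perm (Fin m) |
            ((∀ i, ¬ i ≠ z → σ i = i) ∧ ∀ i, i ≠ z → σ i ≠ i) ∧ cycleCount σ = k}) := by
    ext ⟨c, σ⟩
    simp only [Set.mem_setOf_eq, Set.mem_union, Set.mem_image, ColoredDerangements,
      ColoredPerms]
    constructor
    · rintro ⟨⟨⟨hc, hmono⟩, hder⟩, hcc⟩
      have hc1 : ∀ i : Fin m, i ≠ z → c i = 1 := by
        intro i hi
        have h := hc i
        rw [hconj i, if_neg hi] at h
        omega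
      have hcz : c z = 1 ∨ c z = 2 := by
        have h := hc z
        rw [hconj z, if_pos rfl] at h
        omega
      rcases hcz with hcz | hcz
      · left
        refine ⟨σ, ⟨fun i hi => ?_, hcc⟩, ?_⟩
        · by_cases hiz : i = z
          · exact hder i hi (by rw [hiz]; exact hcz)
          · exact hder i hi (hc1 i hiz)
        · refine Prod.ext ?_ rfl
          funext i
          by_cases hiz : i = z
          · rw [hiz]; exact hcz.symm
          · exact (hc1 i hiz).symm
      · right
        have hσz : σ z = z := by
          by_contra hne
          have h1 : c (σ z) = c z := hmono z
          have h2 : c (σ z) = 1 := hc1 _ hne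
          omega
        refine ⟨σ, ⟨⟨fun i hi => ?_, fun i hi => ?_⟩, hcc⟩, ?_⟩
        · have hiz : i = z := by push_neg at hi; exact hi
          rw [hiz]; exact hσz
        · intro hfix
          exact hder i hfix (hc1 i hi)
        · refine Prod.ext ?_ rfl
          funext i
          simp only [hc2]
          by_cases hiz : i = z
          · rw [if_pos hiz, hiz]; exact hcz.symm
          · rw [if_neg hiz]; exact (hc1 i hiz).symm
    · rintro (⟨σ', ⟨hder, hcc⟩, heq⟩ | ⟨σ', ⟨⟨hfix, hder⟩, hcc⟩, heq⟩)
      · injection heq with hc hσ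
        subst hσ
        subst hc
        refine ⟨⟨⟨fun i => ⟨le_refl 1, ?_⟩, fun i => rfl⟩,
          fun i hi => absurd hi (hder i)⟩, hcc⟩
        rw [hconj i]
        show (1:ℕ) ≤ _
        split <;> omega
      · injection heq with hc hσ
        subst hσ
        subst hc
        have hσz : σ' z = z := hfix z (by push_neg; rfl)
        refine ⟨⟨⟨fun i => ?_, fun i => ?_⟩, fun i hi => ?_⟩, hcc⟩
        · rw [hconj i]
          simp only [hc2]
          constructor
          · split <;> omega
          · split <;> omega
        · show c2 (σ' i) = c2 i
          simp only [hc2]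
          by_cases hiz : i = z
          · rw [hiz, hσz]
          · have h3 : σ' i ≠ z := by
              intro hh
              exact hiz (σ'.injective (by rw [hh, hσz]))
            rw [if_neg h3]; exact (if_neg hiz).symm
        · show c2 i ≠ 1
          simp only [hc2]
          by_cases hiz : i = z
          · exact ne_of_eq_of_ne (if_pos hiz) (by omega)
          · exact absurd hi (hder i hiz)
  rw [hset]
  change Set.ncard (_ ∪ _ : Set ((Fin m → ℕ) × Perm (Fin m))) = _
  rw [Set.ncard_union_eq ?_ (Set.toFinite _) (Set.toFinite _)]
  · congr 1
    · rw [Set.ncard_image_of_injective _ (fun a b h => (Prod.ext_iff.mp h).2)]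
      have h2 : {σ : Perm (Fin m) | (∀ i, σ i ≠ i) ∧ cycleCount σ = k}
          = ↑(univ.filter fun σ : Perm (Fin m) => (∀ i, σ i ≠ i) ∧ cycleCount σ = k) := by
        ext σ; simp
      rw [h2, Set.ncard_coe_finset]
    · rw [Set.ncard_image_of_injective _ (fun a b h => (Prod.ext_iff.mp h).2)]
      have h2 : {σ : Perm (Fin m) |
            ((∀ i, ¬ i ≠ z → σ i = i) ∧ ∀ i, i ≠ z → σ i ≠ i) ∧ cycleCount σ = k}
          = ↑(univ.filter fun σ : Perm (Fin m) =>
              ((∀ i, ¬ i ≠ z → σ i = i) ∧ ∀ i, i ≠ z → σ i ≠ i) ∧ cycleCount σ = k) := by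
        ext σ; simp
      rw [h2, Set.ncard_coe_finset]
  · rw [Set.disjoint_left]
    rintro ⟨c, σ⟩ ⟨σ₁, _, heq₁⟩ ⟨σ₂, h₂, heq₂⟩
    have h1 := congrFun (congrArg Prod.fst heq₁) z
    have h2 := congrFun (congrArg Prod.fst heq₂) z
    simp only [hc2, if_pos rfl] at h1 h2
    omega

end JackAux

section JackMain
open Equiv Equiv.Perm

/-- `D^{(n)}_α = α(n − 1) · D^{(n−1,1)}_α`. -/
theorem jackD_one_row_eq (n : ℕ) (hn : 2 ≤ n) (α : ℝ) :
    JackD [n] α = α * ((n : ℝ) - 1) * JackD [n - 1, 1] α := by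
  classical
  set m := n - 1 with hmdef
  have hm1 : 1 ≤ m := by omega
  have hL : JackD [n] α = Fpoly n α := by
    unfold JackD
    simp only [List.headI]
    have hstep : ∀ k ∈ Icc 1 n, (dCount [n] k : ℝ) * α ^ (n - k)
        = ((univ.filter fun σ : Perm (Fin n) =>
            (∀ i, σ i ≠ i) ∧ cycleCount σ = k).card : ℝ) * α ^ (n - k) := by
      intro k _
      rw [dCount_single n hn k]
    rw [sum_congr rfl hstep, regroup n (by omega) (fun σ => ∀ i, σ i ≠ i) α]
    have h2 := esum_eq_fpoly (β := Fin n) α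
    unfold Esum at h2
    rw [Fintype.card_fin] at h2
    convert h2 using 2
    first
    | rfl
    | exact Finset.filter_congr_decidable _ _ _
    | exact (Finset.filter_congr_decidable _ _ _).symm
  have hcard : Fintype.card {x : Fin m // x ≠ (⟨0, hm1⟩ : Fin m)} = m - 1 := by
    rw [Fintype.card_subtype_compl, Fintype.card_subtype_eq, Fintype.card_fin]
  have hR : JackD [m, 1] α = Fpoly m α + Fpoly (m - 1) α := by
    unfold JackD
    simp only [List.headI]
    have hstep : ∀ k ∈ Icc 1 m, (dCount [m, 1] k : ℝ) * α ^ (m - k)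
        = ((univ.filter fun σ : Perm (Fin m) =>
              (∀ i, σ i ≠ i) ∧ cycleCount σ = k).card : ℝ) * α ^ (m - k)
          + ((univ.filter fun σ : Perm (Fin m) =>
              ((∀ i, ¬ i ≠ (⟨0, hm1⟩ : Fin m) → σ i = i)
                ∧ ∀ i, i ≠ (⟨0, hm1⟩ : Fin m) → σ i ≠ i)
              ∧ cycleCount σ = k).card : ℝ) * α ^ (m - k) := by
      intro k _
      rw [dCount_hook m hm1 k]
      push_cast
      ring
    rw [sum_congr rfl hstep, Finset.sum_add_distrib]
    congr 1
    · rw [regroup m hm1 (fun σ => ∀ i, σ i ≠ i) α]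
      have h2 := esum_eq_fpoly (β := Fin m) α
      unfold Esum at h2
      rw [Fintype.card_fin] at h2
      convert h2 using 2
      first
      | rfl
      | exact Finset.filter_congr_decidable _ _ _
      | exact (Finset.filter_congr_decidable _ _ _).symm
    · rw [regroup m hm1 (fun σ =>
        (∀ i, ¬ i ≠ (⟨0, hm1⟩ : Fin m) → σ i = i)
          ∧ ∀ i, i ≠ (⟨0, hm1⟩ : Fin m) → σ i ≠ i) α]
      have h3 := sum_fixing_derangement_eq_esum (fun i : Fin m => i ≠ (⟨0, hm1⟩ : Fin m)) α
      rw [esum_eq_fpoly, hcard] at h3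
      convert h3 using 2
      first
      | rfl
      | exact Finset.filter_congr_decidable _ _ _
      | exact (Finset.filter_congr_decidable _ _ _).symm
  rw [hL, hR]
  have hrec := fpoly_rec (n - 2) α
  have h2 : n - 2 + 2 = n := by omega
  have h3 : n - 2 + 1 = m := by omega
  have h4 : m - 1 = n - 2 := by omega
  rw [h2, h3] at hrec
  rw [hrec, h4]
  have h5 : ((n - 2 : ℕ) : ℝ) + 1 = (n : ℝ) - 1 := by
    have h6 : (2 : ℕ) ≤ n := hn
    rw [Nat.cast_sub h6]
    push_cast
    ring
  rw [h5]
end JackMain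
end

section
/- (Two-row formula, α = 2.) For all integers n ≥ 1 and 0 ≤ k ≤ n/2, the number of colored perfect matching derangements of the two-row shape (n−k, k) satisfies |D′_{(n−k,k)}| = Σ_{i=0}^{k} C(k, i) · (2i − 1)!! · E(n − k − i), where E(m) denotes the number of perfect matchings of {1,…,2m} containing none of the pairs {2t−1, 2t} (with E(0) = 1), (2i−1)!! = 1·3·5⋯(2i−1) with (−1)!! = 1, and C(k,i) is the binomial coefficient. -/
open Finset

section Aux
open Equiv Equiv.Perm Function
open scoped Classical

lemma fiber_card (α : Type) [Fintype α] [DecidableEq α] (a b : α) (hab : a ≠ b) :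
    (univ.filter fun σ : Perm α => (Involutive σ ∧ ∀ p, σ p ≠ p) ∧ σ a = b).card
    = (univ.filter fun τ : Perm {x : α // x ≠ a ∧ x ≠ b} =>
        Involutive τ ∧ ∀ p, τ p ≠ p).card := by
  have key : ∀ σ : Perm α, Involutive σ → σ a = b →
      ∀ x, (x ≠ a ∧ x ≠ b) ↔ (σ x ≠ a ∧ σ x ≠ b) := by
    intro σ hinv hsab x
    have hba : σ b = a := by rw [← hsab]; exact hinv a
    have h1 : σ x = a ↔ x = b := by
      constructor
      · intro h; have := hinv x; rw [h] at this; rw [← this, hsab]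
      · rintro rfl; exact hba
    have h2 : σ x = b ↔ x = a := by
      constructor
      · intro h; have := hinv x; rw [h] at this; rw [← this, hba]
      · rintro rfl; exact hsab
    simp only [ne_eq, h1, h2]; tauto
  have ext_eval : ∀ τ : Perm {x : α // x ≠ a ∧ x ≠ b}, ∀ x : α, ∀ hxa : x ≠ a, ∀ hxb : x ≠ b,
      (swap a b * ofSubtype τ) x = (τ ⟨x, ⟨hxa, hxb⟩⟩ : {x : α // x ≠ a ∧ x ≠ b}).1 := by
    intro τ x hxa hxb
    simp only [Perm.mul_apply]
    rw [ofSubtype_apply_of_mem τ (⟨hxa, hxb⟩ : x ≠ a ∧ x ≠ b)]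
    exact swap_apply_of_ne_of_ne (τ ⟨x, ⟨hxa, hxb⟩⟩).2.1 (τ ⟨x, ⟨hxa, hxb⟩⟩).2.2
  have ext_a : ∀ τ : Perm {x : α // x ≠ a ∧ x ≠ b}, (swap a b * ofSubtype τ) a = b := by
    intro τ
    simp only [Perm.mul_apply]
    rw [ofSubtype_apply_of_not_mem τ (by simp), swap_apply_left]
  have ext_b : ∀ τ : Perm {x : α // x ≠ a ∧ x ≠ b}, (swap a b * ofSubtype τ) b = a := by
    intro τ
    simp only [Perm.mul_apply]
    rw [ofSubtype_apply_of_not_mem τ (by simp [Ne.symm hab]), swap_apply_right]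
  refine Finset.card_bij'
    (fun σ hσ => σ.subtypePerm
      (fun x => (key σ (by simp only [mem_filter, mem_univ, true_and] at hσ; exact hσ.1.1)
             (by simp only [mem_filter, mem_univ, true_and] at hσ; exact hσ.2) x).symm))
    (fun τ _ => swap a b * ofSubtype τ) ?_ ?_ ?_ ?_
  · -- forward mem
    intro σ hσ
    simp only [mem_filter, mem_univ, true_and] at hσ ⊢
    obtain ⟨⟨hinv, hfpf⟩, hsab⟩ := hσ
    constructor
    · intro x; apply Subtype.ext; simp [subtypePerm_apply, hinv x.1]
    · intro p hp
      exact hfpf p.1 (congrArg Subtype.val hp)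
  · -- backward mem
    intro τ hτ
    simp only [mem_filter, mem_univ, true_and] at hτ ⊢
    obtain ⟨hinv, hfpf⟩ := hτ
    refine ⟨⟨?_, ?_⟩, ext_a τ⟩
    · intro x
      by_cases hxa : x = a
      · rw [hxa, ext_a, ext_b]
      · by_cases hxb : x = b
        · rw [hxb, ext_b, ext_a]
        · rw [ext_eval τ x hxa hxb,
            ext_eval τ _ (τ ⟨x, ⟨hxa, hxb⟩⟩).2.1 (τ ⟨x, ⟨hxa, hxb⟩⟩).2.2]
          exact congrArg Subtype.val (hinv ⟨x, ⟨hxa, hxb⟩⟩)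
    · intro p
      by_cases hxa : p = a
      · rw [hxa, ext_a]; exact Ne.symm hab
      · by_cases hxb : p = b
        · rw [hxb, ext_b]; exact hab
        · rw [ext_eval τ p hxa hxb]
          intro h
          exact hfpf ⟨p, ⟨hxa, hxb⟩⟩ (Subtype.ext h)
  · -- left inverse
    intro σ hσ
    simp only [mem_filter, mem_univ, true_and] at hσ
    obtain ⟨⟨hinv, hfpf⟩, hsab⟩ := hσ
    have hba : σ b = a := by rw [← hsab]; exact hinv a
    ext x
    by_cases hxa : x = a
    · rw [hxa, ext_a, hsab]
    · by_cases hxb : x = b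
      · rw [hxb, ext_b, hba]
      · rw [ext_eval _ x hxa hxb]; rfl
  · -- right inverse
    intro τ hτ
    ext x
    simp only [subtypePerm_apply]
    rw [ext_eval τ x.1 x.2.1 x.2.2]

lemma card_fpf_inv : ∀ (i : ℕ) (α : Type) [Fintype α] [DecidableEq α], Fintype.card α = 2 * i →
    (univ.filter fun σ : Perm α => Involutive σ ∧ ∀ p, σ p ≠ p).card
      = ∏ t ∈ range i, (2*t+1) := by
  intro i
  induction i with
  | zero =>
    intro α _ _ hc
    have he : IsEmpty α := Fintype.card_eq_zero_iff.mp (by simpa using hc)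
    rw [Finset.filter_true_of_mem, Finset.card_univ, Fintype.card_perm, hc]
    · simp
    · intro σ _
      exact ⟨fun x => he.elim x, fun p => he.elim p⟩
  | succ i ih =>
    intro α _ _ hc
    have hne : Nonempty α := Fintype.card_pos_iff.mp (by omega)
    obtain ⟨a⟩ := hne
    rw [Finset.card_eq_sum_card_fiberwise
      (f := fun σ : Perm α => σ a) (t := univ.erase a)
      (by intro σ hσ
          simp at hσ
          simp [hσ.2 a])]
    have hfib : ∀ b ∈ univ.erase a,
        ((univ.filter fun σ : Perm α => Involutive σ ∧ ∀ p, σ p ≠ p).filter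
          fun σ => σ a = b).card = ∏ t ∈ range i, (2*t+1) := by
      intro b hb
      have hab : a ≠ b := fun h => (mem_erase.mp hb).1 h.symm
      rw [Finset.filter_filter, fiber_card α a b hab]
      have hcard : Fintype.card {x : α // x ≠ a ∧ x ≠ b} = 2 * i := by
        rw [Fintype.card_subtype]
        have : (univ.filter fun x : α => x ≠ a ∧ x ≠ b) = univ \ {a, b} := by
          ext x; simp [not_or]
        rw [this, Finset.card_sdiff_of_subset (by simp), Finset.card_univ, hc]
        rw [Finset.card_insert_of_notMem (by simp [hab]), Finset.card_singleton]
        omega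
      exact ih _ hcard
    rw [Finset.sum_congr rfl hfib, Finset.sum_const, Finset.card_erase_of_mem (mem_univ a),
      Finset.card_univ, hc, Finset.prod_range_succ, smul_eq_mul]
    have : 2 * (i+1) - 1 = 2*i+1 := by omega
    rw [this]; ring

lemma Ematch_eq (M : ℕ) : Ematch M = (univ.filter fun σ : Perm (Fin (2*M)) =>
    Involutive σ ∧ (∀ p, σ p ≠ p) ∧ ∀ p, (σ p).1/2 ≠ p.1/2).card := by
  rw [Ematch, Set.ncard_eq_toFinset_card']
  congr 1
  ext σ
  simp

lemma card_B (m : ℕ) (S : Finset (Fin m)) :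
    (univ.filter fun τ : Perm {p : Fin (2*m) // blk p ∉ S} =>
      Involutive τ ∧ (∀ p, τ p ≠ p) ∧ ∀ p, blk (τ p).1 ≠ blk p.1).card
    = Ematch (m - S.card) := by
  set M := m - S.card with hMdef
  have hM : Sᶜ.card = M := by
    rw [Finset.card_compl, Fintype.card_fin]
  set o := Sᶜ.orderIsoOfFin hM with ho
  have hb2 : ∀ q : Fin (2*M), q.1 / 2 < M := fun q => by have := q.2; omega
  set ov : Fin M → Fin m := fun j => ((o j : {x : Fin m // x ∈ Sᶜ}) : Fin m) with hov
  have hovmem : ∀ j, ov j ∉ S := fun j => (Finset.mem_compl).mp (o j).2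
  have hovinj : Function.Injective ov := fun a b h =>
    o.injective (Subtype.ext h)
  have hbound : ∀ q : Fin (2*M), 2 * (ov ⟨q.1/2, hb2 q⟩).1 + q.1 % 2 < 2 * m := by
    intro q
    have h1 := (ov ⟨q.1/2, hb2 q⟩).2
    have h2 : q.1 % 2 < 2 := Nat.mod_lt _ (by norm_num)
    omega
  set f : Fin (2*M) → {p : Fin (2*m) // blk p ∉ S} := fun q =>
    ⟨⟨2 * (ov ⟨q.1/2, hb2 q⟩).1 + q.1 % 2, hbound q⟩, by
      have hblk : blk (⟨2 * (ov ⟨q.1/2, hb2 q⟩).1 + q.1 % 2, hbound q⟩ : Fin (2*m))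
          = ov ⟨q.1/2, hb2 q⟩ := by
        apply Fin.ext
        show (2 * _ + q.1 % 2) / 2 = _
        omega
      rw [hblk]
      exact hovmem _⟩ with hf
  have hfblk : ∀ q : Fin (2*M), blk (f q).1 = ov ⟨q.1/2, hb2 q⟩ := by
    intro q
    apply Fin.ext
    show (2 * _ + q.1 % 2) / 2 = _
    omega
  have hgbound : ∀ p : {p : Fin (2*m) // blk p ∉ S},
      2 * (o.symm ⟨blk p.1, Finset.mem_compl.mpr p.2⟩).1 + p.1.1 % 2 < 2 * M := by
    intro p
    have h1 := (o.symm ⟨blk p.1, Finset.mem_compl.mpr p.2⟩).2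
    have h2 : p.1.1 % 2 < 2 := Nat.mod_lt _ (by norm_num)
    omega
  set g : {p : Fin (2*m) // blk p ∉ S} → Fin (2*M) := fun p =>
    ⟨2 * (o.symm ⟨blk p.1, Finset.mem_compl.mpr p.2⟩).1 + p.1.1 % 2, hgbound p⟩ with hg
  have hleft : ∀ q, g (f q) = q := by
    intro q
    have h1 : (⟨blk (f q).1, Finset.mem_compl.mpr (f q).2⟩ : {x : Fin m // x ∈ Sᶜ})
        = o ⟨q.1/2, hb2 q⟩ := Subtype.ext (hfblk q)
    apply Fin.ext
    simp only [hg, h1, OrderIso.symm_apply_apply]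
    have hfv : (f q).1.1 = 2 * (ov ⟨q.1/2, hb2 q⟩).1 + q.1 % 2 := rfl
    omega
  have hright : ∀ p, f (g p) = p := by
    intro p
    have h2 : (⟨(g p).1/2, hb2 (g p)⟩ : Fin M) = o.symm ⟨blk p.1, Finset.mem_compl.mpr p.2⟩ := by
      apply Fin.ext
      have hgv : (g p).1 = 2 * (o.symm ⟨blk p.1, Finset.mem_compl.mpr p.2⟩).1 + p.1.1 % 2 := rfl
      simp only [hgv]
      omega
    apply Subtype.ext
    apply Fin.ext
    have hfv : (f (g p)).1.1 = 2 * (ov ⟨(g p).1/2, hb2 (g p)⟩).1 + (g p).1 % 2 := rfl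
    rw [hfv]
    simp only [h2, hov]
    rw [OrderIso.apply_symm_apply]
    have hgv : (g p).1 % 2 = p.1.1 % 2 := by
      have : (g p).1 = 2 * (o.symm ⟨blk p.1, Finset.mem_compl.mpr p.2⟩).1 + p.1.1 % 2 := rfl
      omega
    rw [hgv]
    have hb : (blk p.1).1 = p.1.1 / 2 := rfl
    rw [hb]
    omega
  set e : Fin (2*M) ≃ {p : Fin (2*m) // blk p ∉ S} := ⟨f, g, hleft, hright⟩ with he
  have hkey : ∀ q q' : Fin (2*M), (blk (f q).1 = blk (f q').1) ↔ q.1/2 = q'.1/2 := by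
    intro q q'
    rw [hfblk, hfblk]
    constructor
    · intro h
      exact congrArg Fin.val (hovinj h)
    · intro h
      congr 1
      exact Fin.ext h
  rw [Ematch_eq]
  have hcond : ∀ τ' : Perm (Fin (2*M)),
      ((Involutive (e.permCongr τ') ∧ (∀ p, (e.permCongr τ') p ≠ p) ∧
        ∀ p, blk ((e.permCongr τ') p).1 ≠ blk p.1)
      ↔ (Involutive τ' ∧ (∀ p, τ' p ≠ p) ∧ ∀ p, (τ' p).1/2 ≠ p.1/2)) := by
    intro τ'
    have hpc : ∀ x, (e.permCongr τ') x = e (τ' (e.symm x)) := fun x => Equiv.permCongr_apply e τ' x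
    constructor
    · rintro ⟨h1, h2, h3⟩
      refine ⟨?_, ?_, ?_⟩
      · intro x
        have := h1 (e x)
        rw [hpc, hpc] at this
        simp only [Equiv.symm_apply_apply] at this
        exact e.injective this
      · intro q h
        have := h2 (e q)
        rw [hpc] at this
        simp only [Equiv.symm_apply_apply] at this
        exact this (congrArg e h)
      · intro q h
        have := h3 (e q)
        rw [hpc] at this
        simp only [Equiv.symm_apply_apply] at this
        exact this ((hkey _ _).mpr h)
    · rintro ⟨h1, h2, h3⟩
      refine ⟨?_, ?_, ?_⟩
      · intro x
        rw [hpc, hpc]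
        simp only [Equiv.symm_apply_apply]
        rw [h1 (e.symm x), Equiv.apply_symm_apply]
      · intro p h
        rw [hpc] at h
        exact h2 (e.symm p) (by
          have := congrArg e.symm h
          simpa using this)
      · intro p h
        rw [hpc] at h
        have hp : blk (e (τ' (e.symm p))).1 = blk (e (e.symm p)).1 := by
          rw [Equiv.apply_symm_apply]; exact h
        exact h3 (e.symm p) ((hkey _ _).mp hp)
  refine Finset.card_bij' (fun τ _ => e.permCongr.symm τ) (fun τ' _ => e.permCongr τ') ?_ ?_ ?_ ?_
  · intro τ hτ
    simp only [mem_filter, mem_univ, true_and] at hτ ⊢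
    have h := hcond (e.permCongr.symm τ)
    rw [Equiv.apply_symm_apply] at h
    exact h.mp hτ
  · intro τ' hτ'
    simp only [mem_filter, mem_univ, true_and] at hτ' ⊢
    exact (hcond τ').mpr hτ'
  · intro τ _
    exact Equiv.apply_symm_apply _ τ
  · intro τ' _
    exact Equiv.symm_apply_apply _ τ'

lemma card_blk_fiber (m : ℕ) (j : Fin m) :
    (univ.filter fun p : Fin (2*m) => blk p = j).card = 2 := by
  have hset : (univ.filter fun p : Fin (2*m) => blk p = j)
      = {(⟨2*j.1, by have := j.2; omega⟩ : Fin (2*m)), ⟨2*j.1+1, by have := j.2; omega⟩} := by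
    ext p
    simp only [mem_filter, mem_univ, true_and, mem_insert, mem_singleton, Fin.ext_iff]
    show p.1/2 = j.1 ↔ _
    have := p.2
    omega
  rw [hset, card_insert_of_notMem (by simp [Fin.ext_iff]), card_singleton]

lemma card_P (m : ℕ) (S : Finset (Fin m)) :
    Fintype.card {p : Fin (2*m) // blk p ∈ S} = 2 * S.card := by
  rw [Fintype.card_subtype]
  rw [Finset.card_eq_sum_card_fiberwise (f := fun p : Fin (2*m) => blk p) (t := S)
    (by intro p hp; simpa using (mem_filter.mp hp).2)]
  have : ∀ j ∈ S, ((univ.filter fun p : Fin (2*m) => blk p ∈ S).filter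
      fun p => blk p = j).card = 2 := by
    intro j hj
    rw [Finset.filter_filter]
    have heq : (univ.filter fun p : Fin (2*m) => blk p ∈ S ∧ blk p = j)
        = univ.filter fun p : Fin (2*m) => blk p = j := by
      ext p
      simp only [mem_filter, mem_univ, true_and]
      constructor
      · exact And.right
      · intro h; exact ⟨h ▸ hj, h⟩
    rw [heq, card_blk_fiber m j]
  rw [Finset.sum_congr rfl this, Finset.sum_const, smul_eq_mul]
  ring

lemma card_MS (m : ℕ) (S : Finset (Fin m)) :
    (univ.filter fun σ : Perm (Fin (2*m)) => Involutive σ ∧ (∀ p, σ p ≠ p) ∧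
        (∀ p, (blk (σ p) ∈ S ↔ blk p ∈ S)) ∧ ∀ p, blk (σ p) = blk p → blk p ∈ S).card
    = (univ.filter fun τ : Perm {p : Fin (2*m) // blk p ∈ S} =>
        Involutive τ ∧ ∀ p, τ p ≠ p).card
      * (univ.filter fun τ : Perm {p : Fin (2*m) // blk p ∉ S} =>
          Involutive τ ∧ (∀ p, τ p ≠ p) ∧ ∀ p, blk (τ p).1 ≠ blk p.1).card := by
  rw [← Finset.card_product]
  have hev1 : ∀ (τ₁ : Perm {p : Fin (2*m) // blk p ∈ S})
      (τ₂ : Perm {p : Fin (2*m) // blk p ∉ S}) (x : Fin (2*m)) (hx : blk x ∈ S),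
      (ofSubtype τ₁ * ofSubtype τ₂) x = (τ₁ ⟨x, hx⟩).1 := by
    intro τ₁ τ₂ x hx
    simp only [Perm.mul_apply]
    rw [ofSubtype_apply_of_not_mem τ₂ (not_not.mpr hx), ofSubtype_apply_of_mem τ₁ hx]
  have hev2 : ∀ (τ₁ : Perm {p : Fin (2*m) // blk p ∈ S})
      (τ₂ : Perm {p : Fin (2*m) // blk p ∉ S}) (x : Fin (2*m)) (hx : blk x ∉ S),
      (ofSubtype τ₁ * ofSubtype τ₂) x = (τ₂ ⟨x, hx⟩).1 := by
    intro τ₁ τ₂ x hx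
    simp only [Perm.mul_apply]
    rw [ofSubtype_apply_of_mem τ₂ hx, ofSubtype_apply_of_not_mem τ₁ (τ₂ ⟨x, hx⟩).2]
  refine Finset.card_bij'
    (fun σ hσ => (σ.subtypePerm (p := fun p => blk p ∈ S)
        (by intro x
            simp only [mem_filter, mem_univ, true_and] at hσ
            exact hσ.2.2.1 x),
      σ.subtypePerm (p := fun p => blk p ∉ S)
        (by intro x
            simp only [mem_filter, mem_univ, true_and] at hσ
            exact not_iff_not.mpr (hσ.2.2.1 x))))
    (fun τ _ => ofSubtype τ.1 * ofSubtype τ.2) ?_ ?_ ?_ ?_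
  · intro σ hσ
    simp only [mem_filter, mem_univ, true_and] at hσ
    obtain ⟨hinv, hfpf, hpres, hder⟩ := hσ
    simp only [Finset.mem_product, mem_filter, mem_univ, true_and]
    refine ⟨⟨?_, ?_⟩, ?_, ?_, ?_⟩
    · intro x; exact Subtype.ext (hinv x.1)
    · intro p hp; exact hfpf p.1 (congrArg Subtype.val hp)
    · intro x; exact Subtype.ext (hinv x.1)
    · intro p hp; exact hfpf p.1 (congrArg Subtype.val hp)
    · intro p hp
      exact p.2 (hder p.1 hp)
  · intro τ hτ
    simp only [Finset.mem_product, mem_filter, mem_univ, true_and] at hτ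
    obtain ⟨⟨hinv1, hfpf1⟩, hinv2, hfpf2, hblk2⟩ := hτ
    simp only [mem_filter, mem_univ, true_and]
    refine ⟨?_, ?_, ?_, ?_⟩
    · intro x
      by_cases hx : blk x ∈ S
      · rw [hev1 _ _ x hx, hev1 _ _ _ (τ.1 ⟨x, hx⟩).2]
        exact congrArg Subtype.val (hinv1 ⟨x, hx⟩)
      · rw [hev2 _ _ x hx, hev2 _ _ _ (τ.2 ⟨x, hx⟩).2]
        exact congrArg Subtype.val (hinv2 ⟨x, hx⟩)
    · intro p
      by_cases hp : blk p ∈ S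
      · rw [hev1 _ _ p hp]
        intro h; exact hfpf1 ⟨p, hp⟩ (Subtype.ext h)
      · rw [hev2 _ _ p hp]
        intro h; exact hfpf2 ⟨p, hp⟩ (Subtype.ext h)
    · intro p
      by_cases hp : blk p ∈ S
      · rw [hev1 _ _ p hp]
        simp [hp, (τ.1 ⟨p, hp⟩).2]
      · rw [hev2 _ _ p hp]
        simp [hp, (τ.2 ⟨p, hp⟩).2]
    · intro p hblk
      by_cases hp : blk p ∈ S
      · exact hp
      · rw [hev2 _ _ p hp] at hblk
        exact absurd hblk (hblk2 ⟨p, hp⟩)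
  · intro σ hσ
    ext x
    by_cases hx : blk x ∈ S
    · rw [hev1 _ _ x hx]; rfl
    · rw [hev2 _ _ x hx]; rfl
  · intro τ hτ
    refine Prod.ext ?_ ?_
    · ext x
      simp only [subtypePerm_apply]
      rw [hev1 _ _ x.1 x.2]
    · ext x
      simp only [subtypePerm_apply]
      rw [hev2 _ _ x.1 x.2]

lemma conjP_two_row (m k j : ℕ) (hjm : j ≤ m) :
    conjP [m, k] j = if j ≤ k then 2 else 1 := by
  unfold conjP
  by_cases h : j ≤ k <;> simp [List.filter_cons, h, hjm]

lemma card_K (m k : ℕ) (hkm : k ≤ m) :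
    (univ.filter fun j : Fin m => j.1 < k).card = k := by
  rw [← Finset.card_range k]
  apply Finset.card_nbij (i := Fin.val)
  · intro j hj
    simpa using hj
  · exact Fin.val_injective.injOn
  · intro t ht
    simp only [Finset.coe_range, Set.mem_Iio] at ht
    exact ⟨⟨t, lt_of_lt_of_le ht hkm⟩, by simp [ht], rfl⟩

/-- Two-row formula, `α = 2`:
`|D′_{(n−k,k)}| = Σ_{i=0}^{k} C(k,i) · (2i−1)!! · E(n−k−i)`. -/
theorem two_row_alpha_two (n k : ℕ) (hn : 1 ≤ n) (hk : 2 * k ≤ n) :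
    (ColoredMatchDerangements [n - k, k]).ncard =
      ∑ i ∈ Finset.range (k + 1),
        Nat.choose k i * (∏ t ∈ Finset.range i, (2 * t + 1)) * Ematch (n - k - i) := by
  have hkm : k ≤ n - k := by omega
  set m := n - k with hm
  set K : Finset (Fin m) := univ.filter (fun j => j.1 < k) with hKdef
  have hKcard : K.card = k := card_K m k hkm
  set Φ : Finset (Fin m) × Perm (Fin (2*m)) → (Fin m → ℕ) × Perm (Fin (2*m)) :=
    fun x => (fun j => if j ∈ x.1 then 2 else 1, x.2) with hΦ
  set B : Finset (Finset (Fin m) × Perm (Fin (2*m))) :=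
    univ.filter (fun x => x.1 ⊆ K ∧ Involutive x.2 ∧ (∀ p, x.2 p ≠ p) ∧
      (∀ p, (blk (x.2 p) ∈ x.1 ↔ blk p ∈ x.1)) ∧
      ∀ p, blk (x.2 p) = blk p → blk p ∈ x.1) with hB
  have hconj : ∀ j : Fin m, conjP [m, k] (j.1 + 1) = if j.1 + 1 ≤ k then 2 else 1 :=
    fun j => conjP_two_row m k (j.1 + 1) j.2
  have himg : ColoredMatchDerangements [m, k] = Φ '' ↑B := by
    ext x
    obtain ⟨c, σ⟩ := x
    show ((Involutive σ ∧ (∀ p : Fin (2*m), σ p ≠ p) ∧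
        (∀ j : Fin m, 1 ≤ c j ∧ c j ≤ conjP [m, k] (j.1 + 1)) ∧
        (∀ p : Fin (2*m), c (blk (σ p)) = c (blk p))) ∧
        (∀ p : Fin (2*m), blk (σ p) = blk p → c (blk p) ≠ 1)) ↔ (c, σ) ∈ Φ '' ↑B
    constructor
    · rintro ⟨⟨hinv, hfpf, hcol, hpres⟩, hder⟩
      have hc2 : ∀ j, c j = 1 ∨ c j = 2 := by
        intro j
        have h1 := (hcol j).1
        have h2 := (hcol j).2
        rw [hconj j] at h2
        by_cases hjk : j.1 + 1 ≤ k
        · rw [if_pos hjk] at h2; omega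
        · rw [if_neg hjk] at h2; omega
      refine ⟨(univ.filter (fun j => c j = 2), σ), ?_, ?_⟩
      · simp only [hB, Finset.mem_coe, mem_filter, mem_univ, true_and]
        refine ⟨?_, hinv, hfpf, ?_, ?_⟩
        · intro j hj
          simp only [mem_filter, mem_univ, true_and] at hj
          have h2 := (hcol j).2
          rw [hconj j, hj] at h2
          simp only [hKdef, mem_filter, mem_univ, true_and]
          by_cases hjk : j.1 + 1 ≤ k
          · omega
          · rw [if_neg hjk] at h2; omega
        · intro p
          exact iff_of_eq (congrArg (fun t => t = 2) (hpres p))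
        · intro p hbp
          have hne := hder p hbp
          rcases hc2 (blk p) with h | h
          · exact absurd h hne
          · exact h
      · simp only [hΦ, Prod.mk.injEq]
        refine Prod.ext ?_ (by trivial)
        funext j
        simp only [mem_filter, mem_univ, true_and]
        by_cases hj2 : c j = 2
        · rw [if_pos hj2, hj2]
        · have h1 : c j = 1 := by rcases hc2 j with h | h; exact h; exact absurd h hj2
          rw [if_neg hj2, h1]
    · rintro ⟨⟨S, τ⟩, hmem, heq⟩
      simp only [hB, Finset.mem_coe, mem_filter, mem_univ, true_and] at hmem
      obtain ⟨hSK, hinv, hfpf, hpres, hder⟩ := hmem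
      simp only [hΦ, Prod.mk.injEq] at heq
      have heq := Prod.mk.inj heq
      obtain ⟨hc, hτ⟩ := heq
      subst hc
      subst hτ
      refine ⟨⟨hinv, hfpf, ?_, ?_⟩, ?_⟩
      · intro j
        constructor
        · show (1:ℕ) ≤ if j ∈ S then 2 else 1
          split_ifs <;> omega
        · show (if j ∈ S then 2 else 1) ≤ conjP [m, k] (j.1 + 1)
          rw [hconj j]
          by_cases hjS : j ∈ S
          · have hjK := hSK hjS
            simp only [hKdef, mem_filter, mem_univ, true_and] at hjK
            rw [if_pos hjS, if_pos (by omega : j.1 + 1 ≤ k)]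
          · rw [if_neg hjS]
            split_ifs <;> omega
      · intro p
        show (if blk (τ p) ∈ S then (2:ℕ) else 1) = if blk p ∈ S then 2 else 1
        have h := hpres p
        by_cases h2 : blk p ∈ S
        · rw [if_pos (h.mpr h2), if_pos h2]
        · rw [if_neg (fun h1 => h2 (h.mp h1)), if_neg h2]
      · intro p hbp
        have hS := hder p hbp
        show (if blk p ∈ S then (2:ℕ) else 1) ≠ 1
        rw [if_pos hS]
        omega
  have hΦinj : Function.Injective Φ := by
    rintro ⟨S, σ⟩ ⟨S', σ'⟩ h
    simp only [hΦ, Prod.mk.injEq] at h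
    obtain ⟨hc, hσ⟩ := h
    refine Prod.ext ?_ hσ
    ext j
    have hcj := congrFun hc j
    constructor
    · intro h1
      by_contra h2
      rw [if_pos h1, if_neg h2] at hcj
      omega
    · intro h2
      by_contra h1
      rw [if_neg h1, if_pos h2] at hcj
      omega
  rw [himg]; refine (Set.ncard_image_of_injective _ hΦinj).trans ?_; rw [Set.ncard_coe_finset]
  rw [Finset.card_eq_sum_card_fiberwise (f := Prod.fst) (t := K.powerset)
    (by rintro ⟨S, σ⟩ hx
        simp [hB] at hx
        exact Finset.mem_powerset.mpr hx.1)]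
  have hfib : ∀ S ∈ K.powerset, (B.filter fun x => x.1 = S).card
      = (∏ t ∈ range S.card, (2*t+1)) * Ematch (m - S.card) := by
    intro S hS
    have hstep : (B.filter fun x => x.1 = S).card
        = (univ.filter fun σ : Perm (Fin (2*m)) => Involutive σ ∧ (∀ p, σ p ≠ p) ∧
            (∀ p, (blk (σ p) ∈ S ↔ blk p ∈ S)) ∧
            ∀ p, blk (σ p) = blk p → blk p ∈ S).card := by
      refine Finset.card_bij' (fun x _ => x.2) (fun σ _ => (S, σ)) ?_ ?_ ?_ ?_
      · rintro ⟨S', σ⟩ hx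
        simp only [hB, mem_filter, mem_univ, true_and] at hx
        obtain ⟨⟨hSK', hMc⟩, hfst⟩ := hx
        simp only [mem_filter, mem_univ, true_and]
        rwa [hfst] at hMc
      · intro σ hσ
        simp only [hB, mem_filter, mem_univ, true_and] at hσ ⊢
        exact ⟨⟨Finset.mem_powerset.mp hS, hσ⟩, by trivial⟩
      · rintro ⟨S', σ⟩ hx
        simp only [mem_filter] at hx
        exact Prod.ext hx.2.symm rfl
      · intro σ _
        rfl
    rw [hstep, card_MS m S, card_B m S, card_fpf_inv S.card _ (card_P m S)]
  rw [Finset.sum_congr rfl hfib, Finset.sum_powerset, hKcard]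
  refine Finset.sum_congr rfl ?_
  intro i hi
  have hconst : ∀ S ∈ K.powersetCard i,
      (∏ t ∈ range S.card, (2*t+1)) * Ematch (m - S.card)
        = (∏ t ∈ range i, (2*t+1)) * Ematch (m - i) := by
    intro S hS
    rw [(Finset.mem_powersetCard.mp hS).2]
  rw [Finset.sum_congr rfl hconst, Finset.sum_const, Finset.card_powersetCard, hKcard,
    smul_eq_mul, mul_assoc]

end Aux
end
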